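/- arXiv:0902.1284 — 8 statements merged into one kernel-verified Lean document; each statement's English description precedes it below -/
import Mathlib

section
/- Let d, m, k, s be positive integers, let δ ∈ (0,1), and let C > 0. Let A ∈ ℝ^{m×d} satisfy the (k+s, δ)-restricted isometry property. Let h ∈ ℝ^m, and suppose ŷ ∈ ℝ^d is s-sparse and satisfies ‖Aŷ − h‖₂² ≤ C·‖A y_{(1:k)} − h‖₂² for every y ∈ ℝ^d. Then for every y ∈ ℝ^d, ‖ŷ − y‖₂² ≤ C₁·‖Ay − h‖₂² + C₂·(‖y − y_{(1:k)}‖₂² + (1/k)·‖y − y_{(1:k)}‖₁²), where C₁ = 2(1+√C)²/(1−δ) and C₂ = 4(1 + (1+√C)/(1−δ))². -/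
open Real MeasureTheory ProbabilityTheory

/-- The Euclidean (ℓ₂) norm of a vector in `ℝ^n`. -/
noncomputable def l2 {n : ℕ} (v : Fin n → ℝ) : ℝ := Real.sqrt (∑ i, v i ^ 2)

/-- The ℓ₁ norm of a vector in `ℝ^n`. -/
def l1 {n : ℕ} (v : Fin n → ℝ) : ℝ := ∑ i, |v i|

/-- A vector is `k`-sparse if it has at most `k` nonzero entries. -/
def Sparse {n : ℕ} (k : ℕ) (v : Fin n → ℝ) : Prop :=
  (Finset.univ.filter fun i => v i ≠ 0).card ≤ k

/-- `(k,δ)`-restricted isometry property. -/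
def RIP {m d : ℕ} (k : ℕ) (δ : ℝ) (A : Matrix (Fin m) (Fin d) ℝ) : Prop :=
  ∀ x : Fin d → ℝ, Sparse k x →
    (1 - δ) * l2 x ^ 2 ≤ l2 (A.mulVec x) ^ 2 ∧ l2 (A.mulVec x) ^ 2 ≤ (1 + δ) * l2 x ^ 2

/-- `z` is a best `k`-sparse approximation `y_{(1:k)}` of `y`: it keeps the `k`
largest-magnitude coordinates of `y` (all coordinates if `k ≥ d`) and zeros the rest. -/
def IsBestApprox {d : ℕ} (k : ℕ) (y z : Fin d → ℝ) : Prop :=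
  ∃ S : Finset (Fin d), S.card = min k d ∧
    (∀ i ∈ S, ∀ j ∉ S, |y j| ≤ |y i|) ∧
    ∀ i, z i = if i ∈ S then y i else 0

namespace SRaux

lemma l2_nonneg {n : ℕ} (v : Fin n → ℝ) : 0 ≤ l2 v := Real.sqrt_nonneg _

lemma l1_nonneg {n : ℕ} (v : Fin n → ℝ) : 0 ≤ l1 v :=
  Finset.sum_nonneg fun _ _ => abs_nonneg _

lemma l2_sq {n : ℕ} (v : Fin n → ℝ) : l2 v ^ 2 = ∑ i, v i ^ 2 :=
  Real.sq_sqrt (Finset.sum_nonneg fun _ _ => sq_nonneg _)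

lemma l2_eq {n : ℕ} (v : Fin n → ℝ) : l2 v = ‖(WithLp.equiv 2 (Fin n → ℝ)).symm v‖ := by
  rw [EuclideanSpace.norm_eq]; simp [l2, sq_abs]

lemma l2_add_le {n : ℕ} (u v : Fin n → ℝ) : l2 (u + v) ≤ l2 u + l2 v := by
  simp only [l2_eq]
  exact norm_add_le ((WithLp.equiv 2 (Fin n → ℝ)).symm u) ((WithLp.equiv 2 (Fin n → ℝ)).symm v)

lemma l2_neg {n : ℕ} (v : Fin n → ℝ) : l2 (-v) = l2 v := by
  simp [l2]

lemma l2_sub_le {n : ℕ} (u v : Fin n → ℝ) : l2 (u - v) ≤ l2 u + l2 v := by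
  have : u - v = u + (-v) := by abel
  rw [this]
  calc l2 (u + -v) ≤ l2 u + l2 (-v) := l2_add_le _ _
    _ = l2 u + l2 v := by rw [l2_neg]

lemma l2_sub_swap {n : ℕ} (u v : Fin n → ℝ) : l2 (u - v) = l2 (v - u) := by
  rw [← l2_neg (v - u), neg_sub]

lemma l2_tri3 {n : ℕ} (u v w : Fin n → ℝ) : l2 (u - w) ≤ l2 (u - v) + l2 (v - w) := by
  have : u - w = (u - v) + (v - w) := by abel
  rw [this]; exact l2_add_le _ _

lemma sq_split {a X Y : ℝ} (ha : 0 ≤ a) (hX : 0 ≤ X) (hY : 0 ≤ Y) (h : a ≤ X + Y) :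
    a ^ 2 ≤ 2 * X ^ 2 + 2 * Y ^ 2 := by nlinarith [sq_nonneg (X - Y)]

lemma le_of_sq_le_sq {x y : ℝ} (hx : 0 ≤ x) (hy : 0 ≤ y) (h : x ^ 2 ≤ y ^ 2) : x ≤ y := by
  nlinarith

/-- top-k selection -/
lemma exists_top {d : ℕ} (v : Fin d → ℝ) (k : ℕ) :
    ∃ S : Finset (Fin d), S.card = min k d ∧ ∀ i ∈ S, ∀ j ∉ S, |v j| ≤ |v i| := by
  induction k with
  | zero => exact ⟨∅, by simp, by simp⟩
  | succ k ih =>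
    obtain ⟨S, hcard, hS⟩ := ih
    rcases le_or_gt d k with hdk | hkd
    · refine ⟨S, ?_, hS⟩
      simp [hcard, Nat.min_eq_right hdk, Nat.min_eq_right (le_trans hdk (Nat.le_succ k))]
    · have hcard' : S.card = k := by simp [hcard, Nat.min_eq_left hkd.le]
      have hne : Sᶜ.Nonempty := by
        rw [← Finset.card_pos, Finset.card_compl, hcard']
        simp only [Fintype.card_fin]; omega
      obtain ⟨i0, hi0, hmax⟩ := Finset.exists_max_image Sᶜ (fun i => |v i|) hne
      have hi0S : i0 ∉ S := by simpa using hi0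
      refine ⟨insert i0 S, ?_, ?_⟩
      · rw [Finset.card_insert_of_notMem hi0S, hcard']
        omega
      · intro i hi j hj
        have hjS : j ∉ S := fun hjS => hj (Finset.mem_insert_of_mem hjS)
        rcases Finset.mem_insert.mp hi with rfl | hiS
        · exact hmax j (by simpa using hjS)
        · exact hS i hiS j hjS

lemma l2_le_sqrt_card {d : ℕ} {k : ℕ} {t : ℝ} (v : Fin d → ℝ)
    (hs : (Finset.univ.filter fun i => v i ≠ 0).card ≤ k)
    (ht : 0 ≤ t) (hb : ∀ i, |v i| ≤ t) : l2 v ≤ Real.sqrt k * t := by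
  have h1 : ∑ i, v i ^ 2 ≤ (k : ℝ) * t ^ 2 := by
    rw [← Finset.sum_filter_of_ne (p := fun i => v i ≠ 0) (by intro x _ hx h0; exact hx (by simp [h0]))]
    calc ∑ i ∈ Finset.univ.filter fun i => v i ≠ 0, v i ^ 2
        ≤ ∑ _i ∈ Finset.univ.filter fun i => v i ≠ 0, t ^ 2 := by
          apply Finset.sum_le_sum; intro i _
          calc v i ^ 2 = |v i| ^ 2 := (sq_abs _).symm
          _ ≤ t ^ 2 := by nlinarith [hb i, abs_nonneg (v i)]
      _ = ((Finset.univ.filter fun i => v i ≠ 0).card : ℝ) * t ^ 2 := by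
          rw [Finset.sum_const, nsmul_eq_mul]
      _ ≤ (k : ℝ) * t ^ 2 := by
          apply mul_le_mul_of_nonneg_right _ (sq_nonneg t)
          exact_mod_cast hs
  calc l2 v ≤ Real.sqrt ((k : ℝ) * t ^ 2) := Real.sqrt_le_sqrt h1
    _ = Real.sqrt k * t := by
        rw [Real.sqrt_mul (Nat.cast_nonneg k), Real.sqrt_sq ht]

lemma shelling_helper {m d k : ℕ} (hk : 0 < k) {c : ℝ} (hc : 0 ≤ c)
    (A : Matrix (Fin m) (Fin d) ℝ)
    (hA : ∀ x : Fin d → ℝ, Sparse k x → l2 (A.mulVec x) ≤ c * l2 x) :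
    ∀ n : ℕ, ∀ v : Fin d → ℝ, (Finset.univ.filter fun i => v i ≠ 0).card ≤ n →
    ∀ t : ℝ, 0 ≤ t → (∀ i, |v i| ≤ t) →
      l2 (A.mulVec v) ≤ c * (Real.sqrt k * t + l1 v / Real.sqrt k) := by
  have hsk : (0:ℝ) < Real.sqrt k := Real.sqrt_pos.mpr (by exact_mod_cast hk)
  intro n
  induction n using Nat.strong_induction_on with
  | _ n ih =>
    intro v hn t ht hb
    set supp := Finset.univ.filter fun i => v i ≠ 0 with hsupp
    rcases le_or_gt supp.card k with hle | hlt
    · -- base case: v is k-sparse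
      calc l2 (A.mulVec v) ≤ c * l2 v := hA v hle
        _ ≤ c * (Real.sqrt k * t + l1 v / Real.sqrt k) := by
            apply mul_le_mul_of_nonneg_left _ hc
            have := l2_le_sqrt_card (k := k) v hle ht hb
            have h2 : 0 ≤ l1 v / Real.sqrt k := div_nonneg (l1_nonneg v) hsk.le
            linarith
    · -- inductive case
      have hsd : supp.card ≤ d := by
        simpa using Finset.card_le_card (Finset.subset_univ supp)
      have hkd : k < d := lt_of_lt_of_le hlt hsd
      obtain ⟨T, hTcard, hT⟩ := exists_top v k
      have hTk : T.card = k := by rw [hTcard]; omega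
      -- T ⊆ supp
      have hTsupp : T ⊆ supp := by
        intro i hi
        by_contra hins
        have hvi : v i = 0 := by
          by_contra h0; exact hins (by simp [hsupp, h0])
        have : ¬ supp ⊆ T := fun hsub => absurd (Finset.card_le_card hsub) (by omega)
        obtain ⟨j, hjs, hjT⟩ := Finset.not_subset.mp this
        have hj0 : v j ≠ 0 := by simpa [hsupp] using hjs
        have := hT i hi j hjT
        rw [hvi] at this
        simp only [abs_zero] at this
        exact hj0 (abs_eq_zero.mp (le_antisymm this (abs_nonneg _)))
      set a : Fin d → ℝ := fun i => if i ∈ T then v i else 0 with ha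
      set b : Fin d → ℝ := fun i => if i ∈ T then 0 else v i with hbdef
      have hab : v = a + b := by
        funext i; by_cases hi : i ∈ T <;> simp [ha, hbdef, hi]
      have hl1 : l1 v = l1 a + l1 b := by
        simp only [l1, ← Finset.sum_add_distrib]
        apply Finset.sum_congr rfl
        intro i _
        by_cases hi : i ∈ T <;> simp [ha, hbdef, hi]
      have hl1a : l1 a = ∑ i ∈ T, |v i| := by
        rw [l1, show (fun i => |a i|) = fun i => if i ∈ T then |v i| else 0 from
          funext fun i => by by_cases hi : i ∈ T <;> simp [ha, hi]]
        simp [Finset.sum_ite_mem]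
      -- a is k-sparse
      have haspar : (Finset.univ.filter fun i => a i ≠ 0).card ≤ k := by
        have : (Finset.univ.filter fun i => a i ≠ 0) ⊆ T := by
          intro i hi
          simp only [Finset.mem_filter] at hi
          by_contra hiT
          exact hi.2 (by simp [ha, hiT])
        calc _ ≤ T.card := Finset.card_le_card this
          _ = k := hTk
      -- entries of a bounded by t
      have hba : ∀ i, |a i| ≤ t := by
        intro i; by_cases hi : i ∈ T <;> simp [ha, hi, hb i, ht]
      -- pointwise bound for b
      have hminT : ∀ i, |b i| ≤ l1 a / k := by
        intro i
        by_cases hi : i ∈ T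
        · simp only [hbdef, hi, if_true, abs_zero]
          exact div_nonneg (by rw [hl1a]; exact Finset.sum_nonneg fun _ _ => abs_nonneg _)
            (Nat.cast_nonneg k)
        · simp only [hbdef, hi, if_false]
          rw [le_div_iff₀ (by exact_mod_cast hk)]
          have : ∀ j ∈ T, |v i| ≤ |v j| := fun j hj => hT j hj i hi
          calc |v i| * k = ∑ _j ∈ T, |v i| := by
                rw [Finset.sum_const, nsmul_eq_mul, hTk]; ring
            _ ≤ ∑ j ∈ T, |v j| := Finset.sum_le_sum this
            _ = l1 a := hl1a.symm
      -- supp of b strictly smaller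
      have hbsupp : (Finset.univ.filter fun i => b i ≠ 0).card ≤ n - 1 := by
        have hsub : (Finset.univ.filter fun i => b i ≠ 0) ⊆ supp \ T := by
          intro i hi
          simp only [Finset.mem_filter] at hi
          have hiT : i ∉ T := by
            by_contra hiT; exact hi.2 (by simp [hbdef, hiT])
          have : v i ≠ 0 := by
            intro h0; exact hi.2 (by simp [hbdef, hiT, h0])
          exact Finset.mem_sdiff.mpr ⟨by simp [hsupp, this], hiT⟩
        calc _ ≤ (supp \ T).card := Finset.card_le_card hsub
          _ = supp.card - T.card := by rw [Finset.card_sdiff_of_subset hTsupp]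
          _ ≤ n - 1 := by omega
      have hl1ak : 0 ≤ l1 a / k := div_nonneg (by rw [hl1a]; exact Finset.sum_nonneg fun _ _ => abs_nonneg _) (Nat.cast_nonneg k)
      have hIH := ih (n-1) (by omega) b hbsupp (l1 a / k) hl1ak hminT
      have hAa : l2 (A.mulVec a) ≤ c * (Real.sqrt k * t) := by
        calc l2 (A.mulVec a) ≤ c * l2 a := hA a haspar
          _ ≤ c * (Real.sqrt k * t) :=
            mul_le_mul_of_nonneg_left (l2_le_sqrt_card a haspar ht hba) hc
      have hsksq : Real.sqrt k * Real.sqrt k = (k:ℝ) := Real.mul_self_sqrt (Nat.cast_nonneg k)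
      have key : Real.sqrt k * (l1 a / k) = l1 a / Real.sqrt k := by
        field_simp
        linear_combination l1 a * hsksq
      calc l2 (A.mulVec v) = l2 (A.mulVec a + A.mulVec b) := by
            rw [hab, Matrix.mulVec_add]
        _ ≤ l2 (A.mulVec a) + l2 (A.mulVec b) := l2_add_le _ _
        _ ≤ c * (Real.sqrt k * t) + c * (Real.sqrt k * (l1 a / k) + l1 b / Real.sqrt k) := by
            linarith
        _ = c * (Real.sqrt k * t + l1 v / Real.sqrt k) := by
            rw [key, hl1]; field_simp

lemma shelling {m d k : ℕ} (hk : 0 < k) {c : ℝ} (hc : 0 ≤ c)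
    (A : Matrix (Fin m) (Fin d) ℝ)
    (hA : ∀ x : Fin d → ℝ, Sparse k x → l2 (A.mulVec x) ≤ c * l2 x)
    (v : Fin d → ℝ) :
    l2 (A.mulVec v) ≤ c * (l2 v + l1 v / Real.sqrt k) := by
  have hsk : (0:ℝ) < Real.sqrt k := Real.sqrt_pos.mpr (by exact_mod_cast hk)
  set supp := Finset.univ.filter fun i => v i ≠ 0 with hsupp
  rcases le_or_gt supp.card k with hle | hlt
  · calc l2 (A.mulVec v) ≤ c * l2 v := hA v hle
      _ ≤ c * (l2 v + l1 v / Real.sqrt k) := by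
        apply mul_le_mul_of_nonneg_left _ hc
        have : 0 ≤ l1 v / Real.sqrt k := div_nonneg (l1_nonneg v) hsk.le
        linarith
  · have hsd : supp.card ≤ d := by
      simpa using Finset.card_le_card (Finset.subset_univ supp)
    have hkd : k < d := lt_of_lt_of_le hlt hsd
    obtain ⟨T, hTcard, hT⟩ := exists_top v k
    have hTk : T.card = k := by rw [hTcard]; omega
    set a : Fin d → ℝ := fun i => if i ∈ T then v i else 0 with ha
    set b : Fin d → ℝ := fun i => if i ∈ T then 0 else v i with hbdef
    have hab : v = a + b := by
      funext i; by_cases hi : i ∈ T <;> simp [ha, hbdef, hi]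
    have hl1 : l1 v = l1 a + l1 b := by
      simp only [l1, ← Finset.sum_add_distrib]
      apply Finset.sum_congr rfl
      intro i _
      by_cases hi : i ∈ T <;> simp [ha, hbdef, hi]
    have hl1a : l1 a = ∑ i ∈ T, |v i| := by
      rw [l1, show (fun i => |a i|) = fun i => if i ∈ T then |v i| else 0 from
        funext fun i => by by_cases hi : i ∈ T <;> simp [ha, hi]]
      simp [Finset.sum_ite_mem]
    have haspar : (Finset.univ.filter fun i => a i ≠ 0).card ≤ k := by
      have : (Finset.univ.filter fun i => a i ≠ 0) ⊆ T := by
        intro i hi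
        simp only [Finset.mem_filter] at hi
        by_contra hiT
        exact hi.2 (by simp [ha, hiT])
      calc _ ≤ T.card := Finset.card_le_card this
        _ = k := hTk
    have hminT : ∀ i, |b i| ≤ l1 a / k := by
      intro i
      by_cases hi : i ∈ T
      · simp only [hbdef, hi, if_true, abs_zero]
        exact div_nonneg (by rw [hl1a]; exact Finset.sum_nonneg fun _ _ => abs_nonneg _)
          (Nat.cast_nonneg k)
      · simp only [hbdef, hi, if_false]
        rw [le_div_iff₀ (by exact_mod_cast hk)]
        have : ∀ j ∈ T, |v i| ≤ |v j| := fun j hj => hT j hj i hi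
        calc |v i| * k = ∑ _j ∈ T, |v i| := by
              rw [Finset.sum_const, nsmul_eq_mul, hTk]; ring
          _ ≤ ∑ j ∈ T, |v j| := Finset.sum_le_sum this
          _ = l1 a := hl1a.symm
    have hl1ak : 0 ≤ l1 a / k := div_nonneg
      (by rw [hl1a]; exact Finset.sum_nonneg fun _ _ => abs_nonneg _) (Nat.cast_nonneg k)
    have hIH := shelling_helper hk hc A hA _ b le_rfl (l1 a / k) hl1ak hminT
    have hl2a : l2 a ≤ l2 v := by
      apply Real.sqrt_le_sqrt
      apply Finset.sum_le_sum
      intro i _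
      by_cases hi : i ∈ T <;> simp [ha, hi, sq_nonneg]
    have hAa : l2 (A.mulVec a) ≤ c * l2 a := hA a haspar
    have hsksq : Real.sqrt k * Real.sqrt k = (k:ℝ) := Real.mul_self_sqrt (Nat.cast_nonneg k)
    have key : Real.sqrt k * (l1 a / k) = l1 a / Real.sqrt k := by
      field_simp
      linear_combination l1 a * hsksq
    calc l2 (A.mulVec v) = l2 (A.mulVec a + A.mulVec b) := by
          rw [hab, Matrix.mulVec_add]
      _ ≤ l2 (A.mulVec a) + l2 (A.mulVec b) := l2_add_le _ _
      _ ≤ c * l2 a + c * (Real.sqrt k * (l1 a / k) + l1 b / Real.sqrt k) := by linarith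
      _ ≤ c * l2 v + c * (l1 a / Real.sqrt k + l1 b / Real.sqrt k) := by
          rw [key]
          have := mul_le_mul_of_nonneg_left hl2a hc
          linarith
      _ = c * (l2 v + l1 v / Real.sqrt k) := by rw [hl1]; ring


end SRaux

set_option maxHeartbeats 2000000 in
/-- Theorem 1, reconstruction guarantee under RIP. -/
theorem stmt_0 {d m k s : ℕ} (hd : 0 < d) (hm : 0 < m) (hk : 0 < k) (hs : 0 < s)
    {δ C : ℝ} (hδ0 : 0 < δ) (hδ1 : δ < 1) (hC : 0 < C)
    (A : Matrix (Fin m) (Fin d) ℝ) (hA : RIP (k + s) δ A)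
    (h : Fin m → ℝ) (yhat : Fin d → ℝ) (hyhat : Sparse s yhat)
    (hopt : ∀ y z : Fin d → ℝ, IsBestApprox k y z →
      l2 (A.mulVec yhat - h) ^ 2 ≤ C * l2 (A.mulVec z - h) ^ 2) :
    ∀ y z : Fin d → ℝ, IsBestApprox k y z →
      l2 (yhat - y) ^ 2 ≤
        (2 * (1 + Real.sqrt C) ^ 2 / (1 - δ)) * l2 (A.mulVec y - h) ^ 2 +
        (4 * (1 + (1 + Real.sqrt C) / (1 - δ)) ^ 2) *
          (l2 (y - z) ^ 2 + (1 / (k : ℝ)) * l1 (y - z) ^ 2) := by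
  intro y z hz
  obtain ⟨S, hScard, hStop, hzdef⟩ := hz
  -- basic positivity facts
  have h1δ : (0:ℝ) < 1 - δ := by linarith
  have h1δ' : (0:ℝ) ≤ 1 + δ := by linarith
  have hr : (0:ℝ) < Real.sqrt (1 - δ) := Real.sqrt_pos.mpr h1δ
  have hr2 : Real.sqrt (1 - δ) ^ 2 = 1 - δ := Real.sq_sqrt h1δ.le
  have hq : (0:ℝ) ≤ Real.sqrt (1 + δ) := Real.sqrt_nonneg _
  have hq2 : Real.sqrt (1 + δ) ^ 2 = 1 + δ := Real.sq_sqrt h1δ'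
  have hsC : (0:ℝ) ≤ Real.sqrt C := Real.sqrt_nonneg _
  have hsC2 : Real.sqrt C ^ 2 = C := Real.sq_sqrt hC.le
  have hkpos : (0:ℝ) < (k:ℝ) := by exact_mod_cast hk
  have hsk : (0:ℝ) < Real.sqrt k := Real.sqrt_pos.mpr hkpos
  have hsk2 : Real.sqrt (k:ℝ) ^ 2 = (k:ℝ) := Real.sq_sqrt hkpos.le
  -- z is k-sparse
  have hzk : Sparse k z := by
    have hsub : (Finset.univ.filter fun i => z i ≠ 0) ⊆ S := by
      intro i hi
      simp only [Finset.mem_filter] at hi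
      by_contra hiS
      exact hi.2 (by rw [hzdef i, if_neg hiS])
    calc _ ≤ S.card := Finset.card_le_card hsub
      _ ≤ k := by rw [hScard]; exact Nat.min_le_left k d
  -- yhat - z is (k+s)-sparse
  have hyz : Sparse (k + s) (yhat - z) := by
    have hsub : (Finset.univ.filter fun i => (yhat - z) i ≠ 0) ⊆
        (Finset.univ.filter fun i => yhat i ≠ 0) ∪ (Finset.univ.filter fun i => z i ≠ 0) := by
      intro i hi
      simp only [Finset.mem_filter, Finset.mem_union, Finset.mem_univ, true_and,
        Pi.sub_apply] at hi ⊢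
      by_contra hcon
      push_neg at hcon
      exact hi (by rw [hcon.1, hcon.2, sub_zero])
    calc (Finset.univ.filter fun i => (yhat - z) i ≠ 0).card
        ≤ ((Finset.univ.filter fun i => yhat i ≠ 0) ∪ (Finset.univ.filter fun i => z i ≠ 0)).card :=
          Finset.card_le_card hsub
      _ ≤ (Finset.univ.filter fun i => yhat i ≠ 0).card + (Finset.univ.filter fun i => z i ≠ 0).card :=
          Finset.card_union_le _ _
      _ ≤ k + s := by
        have h1 : (Finset.univ.filter fun i => yhat i ≠ 0).card ≤ s := hyhat
        have h2 : (Finset.univ.filter fun i => z i ≠ 0).card ≤ k := hzk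
        omega
  -- RIP upper bound for k-sparse vectors
  have hup : ∀ x : Fin d → ℝ, Sparse k x → l2 (A.mulVec x) ≤ Real.sqrt (1 + δ) * l2 x := by
    intro x hx
    have hx' : Sparse (k + s) x := le_trans hx (Nat.le_add_right k s)
    have := (hA x hx').2
    apply SRaux.le_of_sq_le_sq (SRaux.l2_nonneg _) (mul_nonneg hq (SRaux.l2_nonneg _))
    rw [mul_pow, hq2]
    exact this
  -- RIP lower bound for yhat - z
  have hlow : Real.sqrt (1 - δ) * l2 (yhat - z) ≤ l2 (A.mulVec (yhat - z)) := by
    have := (hA (yhat - z) hyz).1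
    apply SRaux.le_of_sq_le_sq (mul_nonneg hr.le (SRaux.l2_nonneg _)) (SRaux.l2_nonneg _)
    rw [mul_pow, hr2]
    exact this
  -- optimality
  have hoptz : l2 (A.mulVec yhat - h) ≤ Real.sqrt C * l2 (A.mulVec z - h) := by
    apply SRaux.le_of_sq_le_sq (SRaux.l2_nonneg _) (mul_nonneg hsC (SRaux.l2_nonneg _))
    rw [mul_pow, hsC2]
    exact hopt y z ⟨S, hScard, hStop, hzdef⟩
  -- abbreviations
  set a := l2 (yhat - y) with hadef
  set u := l2 (yhat - z) with hudef
  set P := l2 (y - z) with hPdef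
  set P1 := l1 (y - z) with hP1def
  set E := l2 (A.mulVec y - h) with hEdef
  set x := l2 (A.mulVec z - h) with hxdef
  set g := l2 (A.mulVec (y - z)) with hgdef
  have haP : a ≤ u + P := by
    calc a ≤ l2 (yhat - z) + l2 (z - y) := SRaux.l2_tri3 _ _ _
      _ = u + P := by rw [SRaux.l2_sub_swap z y]
  have hw : l2 (A.mulVec (yhat - z)) ≤ (1 + Real.sqrt C) * x := by
    have heq : A.mulVec (yhat - z) = (A.mulVec yhat - h) - (A.mulVec z - h) := by
      rw [Matrix.mulVec_sub]; abel
    calc l2 (A.mulVec (yhat - z)) = l2 ((A.mulVec yhat - h) - (A.mulVec z - h)) := by rw [heq]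
      _ ≤ l2 (A.mulVec yhat - h) + l2 (A.mulVec z - h) := SRaux.l2_sub_le _ _
      _ ≤ Real.sqrt C * x + x := by rw [← hxdef]; linarith
      _ = (1 + Real.sqrt C) * x := by ring
  have hxEg : x ≤ E + g := by
    have heq : A.mulVec z - h = (A.mulVec y - h) - A.mulVec (y - z) := by
      rw [Matrix.mulVec_sub]; abel
    calc x = l2 ((A.mulVec y - h) - A.mulVec (y - z)) := by rw [hxdef, heq]
      _ ≤ E + g := SRaux.l2_sub_le _ _
  have hgP : g ≤ Real.sqrt (1 + δ) * (P + P1 / Real.sqrt k) := SRaux.shelling hk hq A hup (y - z)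
  -- nonnegativity
  have ha0 : 0 ≤ a := SRaux.l2_nonneg _
  have hu0 : 0 ≤ u := SRaux.l2_nonneg _
  have hP0 : 0 ≤ P := SRaux.l2_nonneg _
  have hP10 : 0 ≤ P1 := SRaux.l1_nonneg _
  have hE0 : 0 ≤ E := SRaux.l2_nonneg _
  have hx0 : 0 ≤ x := SRaux.l2_nonneg _
  have hg0 : 0 ≤ g := SRaux.l2_nonneg _
  -- combine: u ≤ (1 + √C) * (E + g) / √(1-δ)
  have hru : Real.sqrt (1 - δ) * u ≤ (1 + Real.sqrt C) * (E + g) := by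
    calc Real.sqrt (1 - δ) * u ≤ l2 (A.mulVec (yhat - z)) := hlow
      _ ≤ (1 + Real.sqrt C) * x := hw
      _ ≤ (1 + Real.sqrt C) * (E + g) := mul_le_mul_of_nonneg_left hxEg (by linarith)
  have hqr : Real.sqrt (1 + δ) * Real.sqrt (1 - δ) ≤ 1 := by
    apply SRaux.le_of_sq_le_sq (mul_nonneg hq hr.le) zero_le_one
    rw [mul_pow, hq2, hr2]
    nlinarith
  set β := (1 + Real.sqrt C) / Real.sqrt (1 - δ) with hβdef
  set cc := (1 + Real.sqrt C) / (1 - δ) with hccdef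
  have hβ0 : 0 ≤ β := div_nonneg (by linarith) hr.le
  have hcc0 : 0 ≤ cc := div_nonneg (by linarith) h1δ.le
  -- u ≤ β * (E + g)
  have huβ : u ≤ β * (E + g) := by
    rw [hβdef, div_mul_eq_mul_div, le_div_iff₀ hr]
    calc u * Real.sqrt (1 - δ) = Real.sqrt (1 - δ) * u := by ring
      _ ≤ (1 + Real.sqrt C) * (E + g) := hru
  -- β * √(1+δ) ≤ cc
  have hβq : β * Real.sqrt (1 + δ) ≤ cc := by
    rw [hβdef, hccdef, div_mul_eq_mul_div, div_le_div_iff₀ hr h1δ]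
    have : (1 + Real.sqrt C) * Real.sqrt (1 + δ) * (1 - δ) =
        (1 + Real.sqrt C) * (Real.sqrt (1 + δ) * Real.sqrt (1 - δ)) * Real.sqrt (1 - δ) := by
      rw [mul_assoc ((1 + Real.sqrt C)) _ _, mul_assoc]
      congr 1
      rw [mul_assoc, ← pow_two, hr2]
    rw [this]
    have h1 : (1 + Real.sqrt C) * (Real.sqrt (1 + δ) * Real.sqrt (1 - δ)) ≤ (1 + Real.sqrt C) * 1 :=
      mul_le_mul_of_nonneg_left hqr (by linarith)
    calc (1 + Real.sqrt C) * (Real.sqrt (1 + δ) * Real.sqrt (1 - δ)) * Real.sqrt (1 - δ)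
        ≤ (1 + Real.sqrt C) * 1 * Real.sqrt (1 - δ) := mul_le_mul_of_nonneg_right h1 hr.le
      _ = (1 + Real.sqrt C) * Real.sqrt (1 - δ) := by ring
  -- main linear bound
  have hmain : a ≤ β * E + (1 + cc) * (P + P1 / Real.sqrt k) := by
    have h2 : β * g ≤ β * (Real.sqrt (1 + δ) * (P + P1 / Real.sqrt k)) :=
      mul_le_mul_of_nonneg_left hgP hβ0
    have h3 : β * (Real.sqrt (1 + δ) * (P + P1 / Real.sqrt k)) ≤ cc * (P + P1 / Real.sqrt k) := by
      have hPP : 0 ≤ P + P1 / Real.sqrt k := by positivity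
      calc β * (Real.sqrt (1 + δ) * (P + P1 / Real.sqrt k))
          = (β * Real.sqrt (1 + δ)) * (P + P1 / Real.sqrt k) := by ring
        _ ≤ cc * (P + P1 / Real.sqrt k) := mul_le_mul_of_nonneg_right hβq hPP
    have h4 : u ≤ β * E + β * g := by
      calc u ≤ β * (E + g) := huβ
        _ = β * E + β * g := by ring
    have hexp : (1 + cc) * (P + P1 / Real.sqrt k) =
        P + P1 / Real.sqrt k + cc * (P + P1 / Real.sqrt k) := by ring
    have hP1k : 0 ≤ P1 / Real.sqrt k := by positivity
    rw [hexp]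
    linarith [haP, h2, h3, h4]
  -- squaring
  have hX0 : 0 ≤ β * E := mul_nonneg hβ0 hE0
  have hY0 : 0 ≤ (1 + cc) * (P + P1 / Real.sqrt k) := by positivity
  have hsq1 : a ^ 2 ≤ 2 * (β * E) ^ 2 + 2 * ((1 + cc) * (P + P1 / Real.sqrt k)) ^ 2 :=
    SRaux.sq_split ha0 hX0 hY0 hmain
  have hβ2 : β ^ 2 = (1 + Real.sqrt C) ^ 2 / (1 - δ) := by
    rw [hβdef, div_pow, hr2]
  have hPP2 : (P + P1 / Real.sqrt k) ^ 2 ≤ 2 * (P ^ 2 + (1 / (k:ℝ)) * P1 ^ 2) := by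
    have hdiv : (P1 / Real.sqrt k) ^ 2 = (1 / (k:ℝ)) * P1 ^ 2 := by
      rw [div_pow, hsk2]; ring
    have hQ0 : 0 ≤ P1 / Real.sqrt k := by positivity
    have := SRaux.sq_split (a := P + P1 / Real.sqrt k) (by positivity) hP0 hQ0 le_rfl
    rw [hdiv] at this
    linarith
  have hfin : 2 * ((1 + cc) * (P + P1 / Real.sqrt k)) ^ 2 ≤
      (4 * (1 + cc) ^ 2) * (P ^ 2 + (1 / (k:ℝ)) * P1 ^ 2) := by
    have h5 : 0 ≤ (1 + cc) ^ 2 := sq_nonneg _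
    have h6 := mul_le_mul_of_nonneg_left hPP2 h5
    have h7 : ((1 + cc) * (P + P1 / Real.sqrt k)) ^ 2 =
        (1 + cc) ^ 2 * (P + P1 / Real.sqrt k) ^ 2 := by rw [mul_pow]
    rw [h7]
    linarith
  calc a ^ 2 ≤ 2 * (β * E) ^ 2 + 2 * ((1 + cc) * (P + P1 / Real.sqrt k)) ^ 2 := hsq1
    _ ≤ 2 * (β ^ 2 * E ^ 2) + (4 * (1 + cc) ^ 2) * (P ^ 2 + (1 / (k:ℝ)) * P1 ^ 2) := by
        rw [mul_pow]; linarith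
    _ = (2 * (1 + Real.sqrt C) ^ 2 / (1 - δ)) * E ^ 2 +
        (4 * (1 + cc) ^ 2) * (P ^ 2 + (1 / (k:ℝ)) * P1 ^ 2) := by
        rw [hβ2]; ring
end

section
/- Let A = [a₁ | … | a_d] ∈ ℝ^{m×d} have unit ℓ₂-norm columns with coherence μ(A) ≤ 0.1/k, and let h ∈ ℝ^m. Run Orthogonal Matching Pursuit for 2k steps starting from the zero vector: maintain a selected index set J (initially empty) and a current solution; at each step select an index j* maximizing |a_jᵀ r| over all columns, where r is the current residual h − A·(current solution), add j* to J, and set the new solution to a minimizer of ‖h − Ay‖₂ over vectors y supported on J, with residual r updated accordingly. Then the vector ŷ produced after 2k steps (which is 2k-sparse) satisfies ‖Aŷ − h‖₂² ≤ 23·‖A y_{(1:k)} − h‖₂² for every y ∈ ℝ^d. -/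
open Real MeasureTheory ProbabilityTheory

set_option maxHeartbeats 1600000

namespace OMPAux

variable {m d : ℕ}


lemma aux_sum_sq_nonneg {ι : Type*} (s : Finset ι) (f : ι → ℝ) : 0 ≤ ∑ i ∈ s, f i ^ 2 :=
  Finset.sum_nonneg fun _ _ => sq_nonneg _

lemma aux_abs_dot {ι : Type*} (s : Finset ι) (f g : ι → ℝ) :
    |∑ i ∈ s, f i * g i| ≤ Real.sqrt (∑ i ∈ s, f i ^ 2) * Real.sqrt (∑ i ∈ s, g i ^ 2) := by
  have h1 := Finset.sum_mul_sq_le_sq_mul_sq s f g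
  calc |∑ i ∈ s, f i * g i| = Real.sqrt ((∑ i ∈ s, f i * g i) ^ 2) := (Real.sqrt_sq_eq_abs _).symm
    _ ≤ Real.sqrt ((∑ i ∈ s, f i ^ 2) * ∑ i ∈ s, g i ^ 2) := Real.sqrt_le_sqrt h1
    _ = Real.sqrt (∑ i ∈ s, f i ^ 2) * Real.sqrt (∑ i ∈ s, g i ^ 2) :=
        Real.sqrt_mul (aux_sum_sq_nonneg s f) _

lemma aux_dot_le {ι : Type*} (s : Finset ι) (f g : ι → ℝ) :
    ∑ i ∈ s, f i * g i ≤ Real.sqrt (∑ i ∈ s, f i ^ 2) * Real.sqrt (∑ i ∈ s, g i ^ 2) :=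
  le_trans (le_abs_self _) (aux_abs_dot s f g)

lemma aux_l2tri {ι : Type*} (s : Finset ι) (f g : ι → ℝ) :
    Real.sqrt (∑ i ∈ s, (f i + g i) ^ 2) ≤
      Real.sqrt (∑ i ∈ s, f i ^ 2) + Real.sqrt (∑ i ∈ s, g i ^ 2) := by
  set a := Real.sqrt (∑ i ∈ s, f i ^ 2) with ha
  set b := Real.sqrt (∑ i ∈ s, g i ^ 2) with hb
  have ha0 : 0 ≤ a := Real.sqrt_nonneg _
  have hb0 : 0 ≤ b := Real.sqrt_nonneg _
  have ha2 : a ^ 2 = ∑ i ∈ s, f i ^ 2 := Real.sq_sqrt (aux_sum_sq_nonneg s f)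
  have hb2 : b ^ 2 = ∑ i ∈ s, g i ^ 2 := Real.sq_sqrt (aux_sum_sq_nonneg s g)
  have hdot : ∑ i ∈ s, f i * g i ≤ a * b := aux_dot_le s f g
  have hexp : ∑ i ∈ s, (f i + g i) ^ 2
      = (∑ i ∈ s, f i ^ 2) + 2 * (∑ i ∈ s, f i * g i) + ∑ i ∈ s, g i ^ 2 := by
    have hpt : ∀ i, (f i + g i) ^ 2 = f i ^ 2 + 2 * (f i * g i) + g i ^ 2 := fun i => by ring
    simp_rw [hpt, Finset.sum_add_distrib, Finset.mul_sum]
  have hle : ∑ i ∈ s, (f i + g i) ^ 2 ≤ (a + b) ^ 2 := by nlinarith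
  calc Real.sqrt (∑ i ∈ s, (f i + g i) ^ 2) ≤ Real.sqrt ((a + b) ^ 2) := Real.sqrt_le_sqrt hle
    _ = a + b := Real.sqrt_sq (by positivity)

lemma aux_sum_abs_sq_le {ι : Type*} (s : Finset ι) (f : ι → ℝ) :
    (∑ i ∈ s, |f i|) ^ 2 ≤ (s.card : ℝ) * ∑ i ∈ s, f i ^ 2 := by
  have h := Finset.sum_mul_sq_le_sq_mul_sq s (fun i => |f i|) (fun _ => (1 : ℝ))
  simp only [mul_one, one_pow, Finset.sum_const, nsmul_eq_mul, sq_abs] at h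
  calc (∑ i ∈ s, |f i|) ^ 2 ≤ (∑ i ∈ s, f i ^ 2) * s.card := h
    _ = (s.card : ℝ) * ∑ i ∈ s, f i ^ 2 := mul_comm _ _

lemma aux_sum_abs_le {ι : Type*} (s : Finset ι) (f : ι → ℝ) :
    ∑ i ∈ s, |f i| ≤ Real.sqrt (s.card : ℝ) * Real.sqrt (∑ i ∈ s, f i ^ 2) := by
  have h0 : 0 ≤ ∑ i ∈ s, |f i| := Finset.sum_nonneg fun _ _ => abs_nonneg _
  calc ∑ i ∈ s, |f i| = Real.sqrt ((∑ i ∈ s, |f i|) ^ 2) := (Real.sqrt_sq h0).symm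
    _ ≤ Real.sqrt ((s.card : ℝ) * ∑ i ∈ s, f i ^ 2) := Real.sqrt_le_sqrt (aux_sum_abs_sq_le s f)
    _ = Real.sqrt (s.card : ℝ) * Real.sqrt (∑ i ∈ s, f i ^ 2) := Real.sqrt_mul (by positivity) _





lemma gram_expand (A : Matrix (Fin m) (Fin d) ℝ) (T : Finset (Fin d)) (x : Fin d → ℝ) :
    ∑ l, (∑ j ∈ T, x j * A l j) ^ 2
      = ∑ j ∈ T, ∑ j' ∈ T, x j * x j' * ∑ l, A l j * A l j' := by
  have h1 : ∀ l : Fin m, (∑ j ∈ T, x j * A l j) ^ 2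
      = ∑ j ∈ T, ∑ j' ∈ T, x j * x j' * (A l j * A l j') := by
    intro l
    rw [sq, Finset.sum_mul_sum]
    apply Finset.sum_congr rfl; intro j _
    apply Finset.sum_congr rfl; intro j' _
    ring
  simp_rw [h1]
  rw [Finset.sum_comm]
  apply Finset.sum_congr rfl; intro j _
  rw [Finset.sum_comm]
  apply Finset.sum_congr rfl; intro j' _
  rw [← Finset.mul_sum]

lemma gram_diag (A : Matrix (Fin m) (Fin d) ℝ)
    (hcols : ∀ j : Fin d, Real.sqrt (∑ l, (A l j) ^ 2) = 1) (j : Fin d) :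
    ∑ l, A l j * A l j = 1 := by
  have h0 : (0:ℝ) ≤ ∑ l, (A l j) ^ 2 := Finset.sum_nonneg fun _ _ => sq_nonneg _
  have : ∑ l, (A l j) ^ 2 = 1 := by
    have := hcols j
    nlinarith [Real.sq_sqrt h0]
  simpa [sq] using this

lemma rip_bounds (A : Matrix (Fin m) (Fin d) ℝ) (k : ℕ) (hk : 0 < k)
    (hcols : ∀ j : Fin d, Real.sqrt (∑ l, (A l j) ^ 2) = 1)
    (hcoh : ∀ j j' : Fin d, j ≠ j' → |∑ l, A l j * A l j'| ≤ 0.1 / (k : ℝ))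
    (T : Finset (Fin d)) (x : Fin d → ℝ) :
    (∑ j ∈ T, x j ^ 2) - 0.1 / (k : ℝ) * (((T.card : ℝ) - 1) * ∑ j ∈ T, x j ^ 2)
        ≤ ∑ l, (∑ j ∈ T, x j * A l j) ^ 2
    ∧ ∑ l, (∑ j ∈ T, x j * A l j) ^ 2
        ≤ (∑ j ∈ T, x j ^ 2) + 0.1 / (k : ℝ) * (((T.card : ℝ) - 1) * ∑ j ∈ T, x j ^ 2) := by
  set μ : ℝ := 0.1 / (k : ℝ) with hμ
  have hμ0 : 0 ≤ μ := by positivity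
  set Sx : ℝ := ∑ j ∈ T, x j ^ 2 with hSx
  set Sa : ℝ := ∑ j ∈ T, |x j| with hSa
  have hSx0 : 0 ≤ Sx := Finset.sum_nonneg fun _ _ => sq_nonneg _
  have hsplit : ∑ l, (∑ j ∈ T, x j * A l j) ^ 2
      = Sx + ∑ j ∈ T, ∑ j' ∈ T.erase j, x j * x j' * ∑ l, A l j * A l j' := by
    rw [gram_expand]
    have hrow : ∀ j ∈ T, ∑ j' ∈ T, x j * x j' * ∑ l, A l j * A l j'
        = x j ^ 2 + ∑ j' ∈ T.erase j, x j * x j' * ∑ l, A l j * A l j' := by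
      intro j hj
      rw [← Finset.add_sum_erase T _ hj, gram_diag A hcols j]
      ring_nf
    rw [Finset.sum_congr rfl hrow, Finset.sum_add_distrib]
  -- bound the off-diagonal part
  have herase : ∀ j ∈ T, ∑ j' ∈ T.erase j, |x j'| = Sa - |x j| := by
    intro j hj
    rw [hSa, ← Finset.add_sum_erase T _ hj]
    ring
  have hoff : |∑ j ∈ T, ∑ j' ∈ T.erase j, x j * x j' * ∑ l, A l j * A l j'|
      ≤ μ * (Sa ^ 2 - Sx) := by
    calc |∑ j ∈ T, ∑ j' ∈ T.erase j, x j * x j' * ∑ l, A l j * A l j'|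
        ≤ ∑ j ∈ T, |∑ j' ∈ T.erase j, x j * x j' * ∑ l, A l j * A l j'| :=
          Finset.abs_sum_le_sum_abs _ _
      _ ≤ ∑ j ∈ T, ∑ j' ∈ T.erase j, |x j| * |x j'| * μ := by
          apply Finset.sum_le_sum; intro j _
          calc |∑ j' ∈ T.erase j, x j * x j' * ∑ l, A l j * A l j'|
              ≤ ∑ j' ∈ T.erase j, |x j * x j' * ∑ l, A l j * A l j'| :=
                Finset.abs_sum_le_sum_abs _ _
            _ ≤ ∑ j' ∈ T.erase j, |x j| * |x j'| * μ := by
                apply Finset.sum_le_sum; intro j' hj'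
                have hne : j ≠ j' := (Finset.ne_of_mem_erase hj').symm
                have := hcoh j j' hne
                rw [abs_mul, abs_mul]
                exact mul_le_mul_of_nonneg_left this (by positivity)
      _ = ∑ j ∈ T, |x j| * μ * (Sa - |x j|) := by
          apply Finset.sum_congr rfl; intro j hj
          rw [show ∑ j' ∈ T.erase j, |x j| * |x j'| * μ
              = |x j| * μ * ∑ j' ∈ T.erase j, |x j'| by
            rw [Finset.mul_sum]; exact Finset.sum_congr rfl fun _ _ => by ring]
          rw [herase j hj]
      _ = μ * (Sa ^ 2 - Sx) := by
          have : ∀ j ∈ T, |x j| * μ * (Sa - |x j|) = μ * (|x j| * Sa) - μ * x j ^ 2 := by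
            intro j _
            have : |x j| ^ 2 = x j ^ 2 := sq_abs _
            nlinarith [this]
          rw [Finset.sum_congr rfl this, Finset.sum_sub_distrib, ← Finset.mul_sum,
            ← Finset.mul_sum, ← Finset.sum_mul, hSx.symm]
          rw [← hSa]
          ring
  have hSa2 : Sa ^ 2 ≤ (T.card : ℝ) * Sx := by
    have h := Finset.sum_mul_sq_le_sq_mul_sq T (fun i => |x i|) (fun _ => (1 : ℝ))
    simp only [mul_one, one_pow, Finset.sum_const, nsmul_eq_mul, sq_abs] at h
    calc Sa ^ 2 ≤ Sx * T.card := h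
      _ = (T.card : ℝ) * Sx := mul_comm _ _
  have hoff2 : |∑ j ∈ T, ∑ j' ∈ T.erase j, x j * x j' * ∑ l, A l j * A l j'|
      ≤ μ * (((T.card : ℝ) - 1) * Sx) := by
    calc |∑ j ∈ T, ∑ j' ∈ T.erase j, x j * x j' * ∑ l, A l j * A l j'|
        ≤ μ * (Sa ^ 2 - Sx) := hoff
      _ ≤ μ * (((T.card : ℝ) - 1) * Sx) := by
          apply mul_le_mul_of_nonneg_left _ hμ0
          nlinarith
  rw [hsplit]
  rw [abs_le] at hoff2
  constructor <;> linarith [hoff2.1, hoff2.2]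

lemma capacity (A : Matrix (Fin m) (Fin d) ℝ) (k : ℕ) (hk : 0 < k)
    (hcols : ∀ j : Fin d, Real.sqrt (∑ l, (A l j) ^ 2) = 1)
    (hcoh : ∀ j j' : Fin d, j ≠ j' → |∑ l, A l j * A l j'| ≤ 0.1 / (k : ℝ))
    (T : Finset (Fin d)) (c : ℝ) (hc0 : 0 ≤ c)
    (hcard : ((T.card : ℝ) - 1) * (0.1 / (k : ℝ)) ≤ c) (v : Fin m → ℝ) :
    ∑ j ∈ T, (∑ l, A l j * v l) ^ 2 ≤ (1 + c) * ∑ l, v l ^ 2 := by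
  set L : ℝ := ∑ j ∈ T, (∑ l, A l j * v l) ^ 2 with hL
  have hL0 : 0 ≤ L := Finset.sum_nonneg fun _ _ => sq_nonneg _
  set xg : Fin d → ℝ := fun j => ∑ l, A l j * v l with hxg
  have hkey : L = ∑ l, (∑ j ∈ T, xg j * A l j) * v l := by
    have : ∀ l, (∑ j ∈ T, xg j * A l j) * v l = ∑ j ∈ T, xg j * A l j * v l := by
      intro l; rw [Finset.sum_mul]
    simp_rw [this]
    rw [Finset.sum_comm]
    apply Finset.sum_congr rfl; intro j _
    rw [hxg]
    simp only []
    rw [show ∑ l, xg j * A l j * v l = xg j * ∑ l, A l j * v l by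
      rw [Finset.mul_sum]; exact Finset.sum_congr rfl fun _ _ => by ring]
    rw [sq]
  have hrip := (rip_bounds A k hk hcols hcoh T xg).2
  have hxg2 : ∑ j ∈ T, xg j ^ 2 = L := rfl
  have hphile : ∑ l, (∑ j ∈ T, xg j * A l j) ^ 2 ≤ (1 + c) * L := by
    rw [hxg2] at hrip
    calc ∑ l, (∑ j ∈ T, xg j * A l j) ^ 2 ≤ L + 0.1 / (k : ℝ) * (((T.card : ℝ) - 1) * L) :=
        hrip
      _ ≤ (1 + c) * L := by nlinarith
  have hnv0 : (0:ℝ) ≤ ∑ l, v l ^ 2 := Finset.sum_nonneg fun _ _ => sq_nonneg _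
  have hdot : L ≤ Real.sqrt (∑ l, (∑ j ∈ T, xg j * A l j) ^ 2) * Real.sqrt (∑ l, v l ^ 2) := by
    rw [hkey]
    exact le_trans (le_abs_self _)
      (by
        have h1 := Finset.sum_mul_sq_le_sq_mul_sq Finset.univ
          (fun l => ∑ j ∈ T, xg j * A l j) v
        calc |∑ l, (∑ j ∈ T, xg j * A l j) * v l|
            = Real.sqrt ((∑ l, (∑ j ∈ T, xg j * A l j) * v l) ^ 2) :=
              (Real.sqrt_sq_eq_abs _).symm
          _ ≤ Real.sqrt ((∑ l, (∑ j ∈ T, xg j * A l j) ^ 2) * ∑ l, v l ^ 2) :=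
              Real.sqrt_le_sqrt h1
          _ = Real.sqrt (∑ l, (∑ j ∈ T, xg j * A l j) ^ 2) * Real.sqrt (∑ l, v l ^ 2) :=
              Real.sqrt_mul (Finset.sum_nonneg fun _ _ => sq_nonneg _) _)
  have hdot2 : L ≤ Real.sqrt ((1 + c) * L) * Real.sqrt (∑ l, v l ^ 2) := by
    calc L ≤ Real.sqrt (∑ l, (∑ j ∈ T, xg j * A l j) ^ 2) * Real.sqrt (∑ l, v l ^ 2) := hdot
      _ ≤ Real.sqrt ((1 + c) * L) * Real.sqrt (∑ l, v l ^ 2) := by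
          apply mul_le_mul_of_nonneg_right (Real.sqrt_le_sqrt hphile) (Real.sqrt_nonneg _)
  rcases eq_or_lt_of_le hL0 with hL0' | hLpos
  · rw [← hL0']; positivity
  · have hsq : L ^ 2 ≤ ((1 + c) * L) * ∑ l, v l ^ 2 := by
      have h2 : (Real.sqrt ((1 + c) * L) * Real.sqrt (∑ l, v l ^ 2)) ^ 2
          = ((1 + c) * L) * ∑ l, v l ^ 2 := by
        rw [mul_pow, Real.sq_sqrt (by positivity), Real.sq_sqrt hnv0]
      nlinarith [Real.sqrt_nonneg ((1 + c) * L), Real.sqrt_nonneg (∑ l, v l ^ 2), hdot2]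
    have := mul_le_mul_of_nonneg_left hsq (le_of_lt (inv_pos.mpr hLpos))
    calc L = L⁻¹ * L ^ 2 := by field_simp [ne_of_gt hLpos]
      _ ≤ L⁻¹ * (((1 + c) * L) * ∑ l, v l ^ 2) := this
      _ = (1 + c) * ∑ l, v l ^ 2 := by field_simp [ne_of_gt hLpos]
lemma aux_sum_add_sq {ι : Type*} (s : Finset ι) (f g : ι → ℝ) :
    ∑ i ∈ s, (f i + g i) ^ 2
      = (∑ i ∈ s, f i ^ 2) + 2 * (∑ i ∈ s, f i * g i) + ∑ i ∈ s, g i ^ 2 := by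
  have hpt : ∀ i, (f i + g i) ^ 2 = f i ^ 2 + 2 * (f i * g i) + g i ^ 2 := fun i => by ring
  simp_rw [hpt, Finset.sum_add_distrib, Finset.mul_sum]

lemma mulVec_apply' (A : Matrix (Fin m) (Fin d) ℝ) (w : Fin d → ℝ) (l : Fin m) :
    A.mulVec w l = ∑ j, A l j * w j := rfl

lemma mulVec_restrict (A : Matrix (Fin m) (Fin d) ℝ) (T : Finset (Fin d)) (w : Fin d → ℝ)
    (hw : ∀ j ∉ T, w j = 0) (l : Fin m) :
    A.mulVec w l = ∑ j ∈ T, w j * A l j := by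
  rw [mulVec_apply']
  rw [← Finset.sum_subset (Finset.subset_univ T) (fun j _ hj => by rw [hw j hj, mul_zero])]
  exact Finset.sum_congr rfl fun j _ => mul_comm _ _

lemma dot_mulVec (A : Matrix (Fin m) (Fin d) ℝ) (w : Fin d → ℝ) (v : Fin m → ℝ) :
    ∑ l, (A.mulVec w) l * v l = ∑ j, w j * ∑ l, A l j * v l := by
  calc ∑ l, (A.mulVec w) l * v l = ∑ l, ∑ j, (w j * (A l j * v l)) := by
        apply Finset.sum_congr rfl; intro l _
        rw [mulVec_apply', Finset.sum_mul]
        exact Finset.sum_congr rfl fun j _ => by ring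
    _ = ∑ j, ∑ l, (w j * (A l j * v l)) := Finset.sum_comm
    _ = ∑ j, w j * ∑ l, A l j * v l := by
        apply Finset.sum_congr rfl; intro j _
        rw [Finset.mul_sum]

lemma step_bound (A : Matrix (Fin m) (Fin d) ℝ) (k : ℕ) (hk : 0 < k)
    (hcols : ∀ j : Fin d, Real.sqrt (∑ l, (A l j) ^ 2) = 1)
    (hcoh : ∀ j j' : Fin d, j ≠ j' → |∑ l, A l j * A l j'| ≤ 0.1 / (k : ℝ))
    (S' Ji : Finset (Fin d))
    (hcardS' : S'.card ≤ k) (hcardT : (S' ∪ Ji).card ≤ 2 * k)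
    (w : Fin d → ℝ) (hw : ∀ j, j ∉ S' ∪ Ji → w j = 0)
    (Ri e : Fin m → ℝ) (hRe : ∀ l, e l = Ri l + ∑ j ∈ S' ∪ Ji, w j * A l j)
    (js : Fin d) (hjs : js ∉ S' ∪ Ji)
    (horth : ∀ j ∈ Ji, ∑ l, A l j * Ri l = 0)
    (hmax : ∀ j, |∑ l, A l j * Ri l| ≤ |∑ l, A l js * Ri l|)
    (hbig : 23 * (∑ l, e l ^ 2) < ∑ l, Ri l ^ 2) :
    1.05 * Real.sqrt (∑ l, e l ^ 2) < |∑ l, A l js * e l| * Real.sqrt (k : ℝ) := by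
  classical
  set T : Finset (Fin d) := S' ∪ Ji with hT
  set u : ℝ := Real.sqrt (∑ l, Ri l ^ 2) with hu
  set ε : ℝ := Real.sqrt (∑ l, e l ^ 2) with hε
  have hu0 : 0 ≤ u := Real.sqrt_nonneg _
  have hε0 : 0 ≤ ε := Real.sqrt_nonneg _
  have hu2 : u ^ 2 = ∑ l, Ri l ^ 2 := Real.sq_sqrt (aux_sum_sq_nonneg _ _)
  have hε2 : ε ^ 2 = ∑ l, e l ^ 2 := Real.sq_sqrt (aux_sum_sq_nonneg _ _)
  have hbig' : 23 * ε ^ 2 < u ^ 2 := by rw [hu2, hε2]; exact hbig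
  have hu479 : 4.79 * ε < u := by nlinarith
  -- numeric sqrt bounds
  have s08 : (0.894 : ℝ) ≤ Real.sqrt 0.8 := by
    nlinarith [Real.sq_sqrt (show (0:ℝ) ≤ 0.8 by norm_num), Real.sqrt_nonneg (0.8:ℝ)]
  have s12 : Real.sqrt 1.2 ≤ 1.096 := by
    nlinarith [Real.sq_sqrt (show (0:ℝ) ≤ 1.2 by norm_num), Real.sqrt_nonneg (1.2:ℝ)]
  have s25 : Real.sqrt 2.5 ≤ 1.582 := by
    nlinarith [Real.sq_sqrt (show (0:ℝ) ≤ 2.5 by norm_num), Real.sqrt_nonneg (2.5:ℝ)]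
  -- the mixed vector Φw
  set P : Fin m → ℝ := fun l => ∑ j ∈ T, w j * A l j with hP
  set nP : ℝ := ∑ l, P l ^ 2 with hnP
  have hnP0 : 0 ≤ nP := aux_sum_sq_nonneg _ _
  set W2 : ℝ := ∑ j ∈ T, w j ^ 2 with hW2
  have hW20 : 0 ≤ W2 := aux_sum_sq_nonneg _ _
  have hk1 : (1:ℝ) ≤ (k:ℝ) := by exact_mod_cast hk
  have hδ : ((T.card : ℝ) - 1) * (0.1 / (k : ℝ)) ≤ 0.2 := by
    have hc : (T.card : ℝ) ≤ 2 * (k:ℝ) := by exact_mod_cast hcardT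
    have hkpos : (0:ℝ) < (k:ℝ) := by positivity
    have h1 : ((T.card : ℝ) - 1) * (0.1 / (k : ℝ)) ≤ (2*(k:ℝ) - 1) * (0.1/(k:ℝ)) :=
      mul_le_mul_of_nonneg_right (by linarith) (by positivity)
    have h2 : (2*(k:ℝ) - 1) * (0.1/(k:ℝ)) ≤ 0.2 := by
      rw [show (2*(k:ℝ)-1) * (0.1/(k:ℝ)) = (0.2*(k:ℝ) - 0.1)/(k:ℝ) by field_simp; ring]
      rw [div_le_iff₀ hkpos]; nlinarith
    linarith
  -- RIP lower: 0.8 * W2 ≤ nP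
  have h08 : 0.8 * W2 ≤ nP := by
    have hrip := (rip_bounds A k hk hcols hcoh T w).1
    have : 0.1 / (k : ℝ) * (((T.card : ℝ) - 1) * W2) ≤ 0.2 * W2 := by
      have := mul_le_mul_of_nonneg_right hδ hW20
      calc 0.1 / (k : ℝ) * (((T.card : ℝ) - 1) * W2)
          = ((T.card : ℝ) - 1) * (0.1 / (k : ℝ)) * W2 := by ring
        _ ≤ 0.2 * W2 := this
    rw [← hW2, ← hnP] at hrip
    linarith [hrip]
  -- pointwise decomposition
  have hP_eq : ∀ l, P l = e l + -(Ri l) := by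
    intro l; have := hRe l; simp only [hP]; linarith
  have hRi_eq : ∀ l, Ri l = e l + -(P l) := by
    intro l; have := hP_eq l; linarith
  -- triangle bounds for sqrt nP
  have htri_up : Real.sqrt nP ≤ ε + u := by
    have h1 : nP = ∑ l, (e l + -(Ri l)) ^ 2 := by
      rw [hnP]; exact Finset.sum_congr rfl fun l _ => by rw [hP_eq l]
    rw [h1]
    calc Real.sqrt (∑ l, (e l + -(Ri l)) ^ 2)
        ≤ Real.sqrt (∑ l, e l ^ 2) + Real.sqrt (∑ l, (-(Ri l)) ^ 2) :=
          aux_l2tri Finset.univ e (fun l => -(Ri l))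
      _ = ε + u := by rw [hε, hu]; congr 2; exact Finset.sum_congr rfl fun l _ => by ring
  have htri_lo : u ≤ ε + Real.sqrt nP := by
    have h1 : ∑ l, Ri l ^ 2 = ∑ l, (e l + -(P l)) ^ 2 :=
      Finset.sum_congr rfl fun l _ => by rw [hRi_eq l]
    calc u = Real.sqrt (∑ l, (e l + -(P l)) ^ 2) := by rw [hu, h1]
      _ ≤ Real.sqrt (∑ l, e l ^ 2) + Real.sqrt (∑ l, (-(P l)) ^ 2) :=
          aux_l2tri Finset.univ e (fun l => -(P l))
      _ = ε + Real.sqrt nP := by rw [hε, hnP]; congr 2; exact Finset.sum_congr rfl fun l _ => by ring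
  -- correlations of P with columns in T capture most of nP
  set G : ℝ := ∑ j ∈ T, (∑ l, A l j * P l) ^ 2 with hG
  have hG0 : 0 ≤ G := aux_sum_sq_nonneg _ _
  have hdotG : ∑ j ∈ T, w j * (∑ l, A l j * P l) = nP := by
    calc ∑ j ∈ T, w j * (∑ l, A l j * P l)
        = ∑ j ∈ T, ∑ l, (w j * A l j) * P l := by
          apply Finset.sum_congr rfl; intro j _
          rw [Finset.mul_sum]; exact Finset.sum_congr rfl fun l _ => by ring
      _ = ∑ l, ∑ j ∈ T, (w j * A l j) * P l := Finset.sum_comm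
      _ = ∑ l, (∑ j ∈ T, w j * A l j) * P l := by
          apply Finset.sum_congr rfl; intro l _
          rw [Finset.sum_mul]
      _ = ∑ l, P l ^ 2 := by
          apply Finset.sum_congr rfl; intro l _
          rw [hP]; ring
      _ = nP := rfl
  have hG08 : 0.8 * nP ≤ G := by
    have hcs : (∑ j ∈ T, w j * (∑ l, A l j * P l)) ^ 2 ≤ W2 * G :=
      Finset.sum_mul_sq_le_sq_mul_sq T w _
    rw [hdotG] at hcs
    have hW2le : W2 ≤ 1.25 * nP := by linarith
    rcases eq_or_lt_of_le hnP0 with h0 | hpos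
    · rw [← h0]; simpa using hG0
    · have hWG : W2 * G ≤ 1.25 * nP * G := mul_le_mul_of_nonneg_right hW2le hG0
      have h2 : nP * nP ≤ nP * (1.25 * G) := by
        have : nP ^ 2 ≤ 1.25 * nP * G := le_trans hcs hWG
        calc nP * nP = nP ^ 2 := by ring
          _ ≤ 1.25 * nP * G := this
          _ = nP * (1.25 * G) := by ring
      have h3 : nP ≤ 1.25 * G := le_of_mul_le_mul_left h2 hpos
      linarith
  clear_value u ε P nP W2 G
  -- capacity bound for e-correlations over T
  have hcapT : ∑ j ∈ T, (∑ l, A l j * e l) ^ 2 ≤ 1.2 * ∑ l, e l ^ 2 := by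
    have := capacity A k hk hcols hcoh T 0.2 (by norm_num) hδ e
    calc ∑ j ∈ T, (∑ l, A l j * e l) ^ 2 ≤ (1 + 0.2) * ∑ l, e l ^ 2 := this
      _ = 1.2 * ∑ l, e l ^ 2 := by norm_num
  -- correlation decomposition over T
  have hcor : ∀ j, (∑ l, A l j * P l) = (∑ l, A l j * e l) + -(∑ l, A l j * Ri l) := by
    intro j
    have hpt : ∀ l, A l j * P l = A l j * e l + -(A l j * Ri l) := by
      intro l; rw [hP_eq l]; ring
    simp_rw [hpt, Finset.sum_add_distrib]
    congr 1
    rw [← Finset.sum_neg_distrib]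
  set PS : ℝ := ∑ j ∈ T, (∑ l, A l j * Ri l) ^ 2 with hPS
  have hPS0 : 0 ≤ PS := aux_sum_sq_nonneg _ _
  have hGtri : Real.sqrt G ≤ Real.sqrt (∑ j ∈ T, (∑ l, A l j * e l) ^ 2) + Real.sqrt PS := by
    have h1 : G = ∑ j ∈ T, ((∑ l, A l j * e l) + -(∑ l, A l j * Ri l)) ^ 2 := by
      rw [hG]; exact Finset.sum_congr rfl fun j _ => by rw [hcor j]
    rw [h1]
    calc Real.sqrt (∑ j ∈ T, ((∑ l, A l j * e l) + -(∑ l, A l j * Ri l)) ^ 2)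
        ≤ Real.sqrt (∑ j ∈ T, (∑ l, A l j * e l) ^ 2)
          + Real.sqrt (∑ j ∈ T, (-(∑ l, A l j * Ri l)) ^ 2) :=
          aux_l2tri T _ _
      _ = Real.sqrt (∑ j ∈ T, (∑ l, A l j * e l) ^ 2) + Real.sqrt PS := by
          congr 2; exact Finset.sum_congr rfl fun j _ => by ring
  set Ms : ℝ := |∑ l, A l js * Ri l| with hMs
  have hMs0 : 0 ≤ Ms := abs_nonneg _
  -- PS is concentrated on at most k coordinates, each at most Ms^2
  have hPSle : PS ≤ (k : ℝ) * Ms ^ 2 := by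
    have hsub : T \ Ji ⊆ T := Finset.sdiff_subset
    have hzero : ∀ j ∈ T, j ∉ T \ Ji → (∑ l, A l j * Ri l) ^ 2 = 0 := by
      intro j hj hj2
      have hjJi : j ∈ Ji := by
        by_contra hc
        exact hj2 (Finset.mem_sdiff.mpr ⟨hj, hc⟩)
      rw [horth j hjJi]; norm_num
    have heq : ∑ j ∈ T \ Ji, (∑ l, A l j * Ri l) ^ 2 = PS := Finset.sum_subset hsub hzero
    have hterm : ∀ j ∈ T \ Ji, (∑ l, A l j * Ri l) ^ 2 ≤ Ms ^ 2 := by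
      intro j _
      have h1 := hmax j
      calc (∑ l, A l j * Ri l) ^ 2 = |∑ l, A l j * Ri l| ^ 2 := (sq_abs _).symm
        _ ≤ Ms ^ 2 := by rw [hMs]; exact pow_le_pow_left₀ (abs_nonneg _) h1 2
    have hsum := Finset.sum_le_card_nsmul (T \ Ji) _ (Ms ^ 2) hterm
    rw [heq] at hsum
    have hcard2 : ((T \ Ji).card : ℝ) ≤ (k : ℝ) := by
      have hTd : T \ Ji ⊆ S' := by
        intro j hj
        rcases Finset.mem_sdiff.mp hj with ⟨hjT, hjJi⟩
        rcases Finset.mem_union.mp hjT with h | h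
        · exact h
        · exact absurd h hjJi
      have := Finset.card_le_card hTd
      exact_mod_cast le_trans this hcardS'
    have : ((T \ Ji).card : ℝ) * Ms ^ 2 ≤ (k : ℝ) * Ms ^ 2 :=
      mul_le_mul_of_nonneg_right hcard2 (sq_nonneg _)
    calc PS ≤ ((T \ Ji).card) • Ms ^ 2 := hsum
      _ = ((T \ Ji).card : ℝ) * Ms ^ 2 := nsmul_eq_mul _ _
      _ ≤ (k : ℝ) * Ms ^ 2 := this
  clear_value PS Ms
  set sk : ℝ := Real.sqrt (k : ℝ) with hsk
  have hsk0 : 0 ≤ sk := Real.sqrt_nonneg _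
  have hsk2 : sk * sk = (k : ℝ) := Real.mul_self_sqrt (by positivity)
  clear_value sk
  have hPSsk : Real.sqrt PS ≤ sk * Ms := by
    calc Real.sqrt PS ≤ Real.sqrt ((k : ℝ) * Ms ^ 2) := Real.sqrt_le_sqrt hPSle
      _ = sk * Real.sqrt (Ms ^ 2) := by rw [hsk, Real.sqrt_mul (by positivity)]
      _ = sk * Ms := by rw [Real.sqrt_sq hMs0]
  -- interference bound
  have hintf1 : |∑ l, A l js * P l| ≤ (0.1 / (k : ℝ)) * ∑ j ∈ T, |w j| := by
    have hswap : ∑ l, A l js * P l = ∑ j ∈ T, w j * ∑ l, A l js * A l j := by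
      calc ∑ l, A l js * P l = ∑ l, ∑ j ∈ T, w j * (A l js * A l j) := by
            apply Finset.sum_congr rfl; intro l _
            rw [hP, Finset.mul_sum]
            exact Finset.sum_congr rfl fun j _ => by ring
        _ = ∑ j ∈ T, ∑ l, w j * (A l js * A l j) := Finset.sum_comm
        _ = ∑ j ∈ T, w j * ∑ l, A l js * A l j := by
            apply Finset.sum_congr rfl; intro j _
            rw [Finset.mul_sum]
    rw [hswap]
    calc |∑ j ∈ T, w j * ∑ l, A l js * A l j|
        ≤ ∑ j ∈ T, |w j * ∑ l, A l js * A l j| := Finset.abs_sum_le_sum_abs _ _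
      _ ≤ ∑ j ∈ T, |w j| * (0.1 / (k : ℝ)) := by
          apply Finset.sum_le_sum; intro j hj
          rw [abs_mul]
          have hne : js ≠ j := fun hcon => hjs (hcon ▸ hj)
          exact mul_le_mul_of_nonneg_left (hcoh js j hne) (abs_nonneg _)
      _ = (0.1 / (k : ℝ)) * ∑ j ∈ T, |w j| := by rw [← Finset.sum_mul]; ring
  have hintf2 : |∑ l, A l js * P l| * sk ≤ 0.1 * Real.sqrt 2.5 * (u + ε) := by
    have hW2sqrt : Real.sqrt W2 ≤ Real.sqrt 1.25 * (u + ε) := by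
      have h1 : W2 ≤ 1.25 * nP := by linarith
      calc Real.sqrt W2 ≤ Real.sqrt (1.25 * nP) := Real.sqrt_le_sqrt h1
        _ = Real.sqrt 1.25 * Real.sqrt nP := Real.sqrt_mul (by norm_num) _
        _ ≤ Real.sqrt 1.25 * (u + ε) := by
            apply mul_le_mul_of_nonneg_left _ (Real.sqrt_nonneg _)
            linarith [htri_up]
    have habs : ∑ j ∈ T, |w j| ≤ Real.sqrt (2 * (k : ℝ)) * (Real.sqrt 1.25 * (u + ε)) := by
      calc ∑ j ∈ T, |w j| ≤ Real.sqrt (T.card : ℝ) * Real.sqrt W2 := by rw [hW2]; exact aux_sum_abs_le T w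
        _ ≤ Real.sqrt (2 * (k : ℝ)) * (Real.sqrt 1.25 * (u + ε)) := by
            apply mul_le_mul
            · apply Real.sqrt_le_sqrt; exact_mod_cast hcardT
            · exact hW2sqrt
            · exact Real.sqrt_nonneg _
            · exact Real.sqrt_nonneg _
    have hkpos : (0:ℝ) < (k:ℝ) := by positivity
    have h2k : Real.sqrt (2 * (k : ℝ)) = Real.sqrt 2 * sk := by
      rw [hsk, Real.sqrt_mul (by norm_num)]
    have hs2s125 : Real.sqrt 2 * Real.sqrt 1.25 = Real.sqrt 2.5 := by
      rw [← Real.sqrt_mul (by norm_num)]; norm_num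
    calc |∑ l, A l js * P l| * sk ≤ ((0.1 / (k : ℝ)) * ∑ j ∈ T, |w j|) * sk := by
          apply mul_le_mul_of_nonneg_right hintf1 hsk0
      _ ≤ ((0.1 / (k : ℝ)) * (Real.sqrt 2 * sk * (Real.sqrt 1.25 * (u + ε)))) * sk := by
          apply mul_le_mul_of_nonneg_right _ hsk0
          apply mul_le_mul_of_nonneg_left _ (by positivity)
          rw [← h2k]; exact habs
      _ = 0.1 * (Real.sqrt 2 * Real.sqrt 1.25) * (u + ε) * ((sk * sk) / (k:ℝ)) := by ring
      _ = 0.1 * Real.sqrt 2.5 * (u + ε) := by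
          rw [hs2s125, hsk2]; field_simp
  -- fuel bound
  have hfuel : Ms ≤ |∑ l, A l js * e l| + |∑ l, A l js * P l| := by
    have h1 : (∑ l, A l js * Ri l) = (∑ l, A l js * e l) + -(∑ l, A l js * P l) := by
      have := hcor js; linarith
    rw [hMs, h1]
    calc |(∑ l, A l js * e l) + -(∑ l, A l js * P l)|
        ≤ |∑ l, A l js * e l| + |-(∑ l, A l js * P l)| := abs_add_le _ _
      _ = |∑ l, A l js * e l| + |∑ l, A l js * P l| := by rw [abs_neg]
  -- lower bound on Ms * sk
  have hMssk : Real.sqrt 0.8 * (u - ε) - Real.sqrt 1.2 * ε ≤ Ms * sk := by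
    have h1 : Real.sqrt (0.8 * nP) ≤ Real.sqrt G := Real.sqrt_le_sqrt hG08
    have h2 : Real.sqrt (0.8 * nP) = Real.sqrt 0.8 * Real.sqrt nP := Real.sqrt_mul (by norm_num) _
    have h3 : Real.sqrt 0.8 * (u - ε) ≤ Real.sqrt 0.8 * Real.sqrt nP := by
      apply mul_le_mul_of_nonneg_left _ (Real.sqrt_nonneg _)
      linarith [htri_lo]
    have h4 : Real.sqrt (∑ j ∈ T, (∑ l, A l j * e l) ^ 2) ≤ Real.sqrt 1.2 * ε := by
      calc Real.sqrt (∑ j ∈ T, (∑ l, A l j * e l) ^ 2)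
          ≤ Real.sqrt (1.2 * ∑ l, e l ^ 2) := Real.sqrt_le_sqrt hcapT
        _ = Real.sqrt 1.2 * Real.sqrt (∑ l, e l ^ 2) := Real.sqrt_mul (by norm_num) _
        _ = Real.sqrt 1.2 * ε := by rw [hε]
    have h5 : Real.sqrt G ≤ Real.sqrt 1.2 * ε + Real.sqrt PS := by linarith [hGtri, h4]
    have h6 : Real.sqrt 0.8 * (u - ε) ≤ Real.sqrt 1.2 * ε + sk * Ms := by
      linarith [h1, h3, h5, hPSsk, h2.symm.le, h2.le]
    linarith [h6]
  -- final numeric combination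
  have hfinal : 1.05 * ε < |∑ l, A l js * e l| * sk := by
    have hfsk : Ms * sk - |∑ l, A l js * P l| * sk ≤ |∑ l, A l js * e l| * sk := by
      have := mul_le_mul_of_nonneg_right hfuel hsk0
      linarith [this, add_mul (|∑ l, A l js * e l|) (|∑ l, A l js * P l|) sk ▸ this]
    have huε : 0 ≤ u - ε := by nlinarith
    have hb1 : (0.894 : ℝ) * (u - ε) ≤ Real.sqrt 0.8 * (u - ε) :=
      mul_le_mul_of_nonneg_right s08 huε
    have hb2 : Real.sqrt 1.2 * ε ≤ 1.096 * ε := mul_le_mul_of_nonneg_right s12 hε0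
    have hb3 : 0.1 * Real.sqrt 2.5 * (u + ε) ≤ 0.1 * 1.582 * (u + ε) := by
      apply mul_le_mul_of_nonneg_right _ (by linarith)
      linarith
    linarith [hfsk, hMssk, hintf2, hb1, hb2, hb3, hu479, hε0]
  exact hfinal


end OMPAux

open OMPAux in
/-- Theorem 2, guarantee for Orthogonal Matching Pursuit.
The OMP run is modeled by the sequence of selected-index sets `J i` and
intermediate solutions `ysol i`; `ysol (2*k)` is the output `ŷ`. -/
theorem stmt_1 {d m k : ℕ} (hk : 0 < k)
    (A : Matrix (Fin m) (Fin d) ℝ) (h : Fin m → ℝ)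
    (hcols : ∀ j : Fin d, l2 (fun i => A i j) = 1)
    (hcoh : ∀ j j' : Fin d, j ≠ j' → |∑ i, A i j * A i j'| ≤ 0.1 / (k : ℝ))
    (J : ℕ → Finset (Fin d)) (ysol : ℕ → Fin d → ℝ)
    (hJ0 : J 0 = ∅) (hy0 : ysol 0 = 0)
    (hstep : ∀ i < 2 * k, ∃ jstar : Fin d,
      (∀ j : Fin d, |∑ l, A l j * (h - A.mulVec (ysol i)) l| ≤
        |∑ l, A l jstar * (h - A.mulVec (ysol i)) l|) ∧
      J (i + 1) = insert jstar (J i) ∧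
      (∀ c : Fin d, c ∉ J (i + 1) → ysol (i + 1) c = 0) ∧
      (∀ z : Fin d → ℝ, (∀ c : Fin d, c ∉ J (i + 1) → z c = 0) →
        l2 (A.mulVec (ysol (i + 1)) - h) ≤ l2 (A.mulVec z - h))) :
    ∀ y z : Fin d → ℝ, IsBestApprox k y z →
      l2 (A.mulVec (ysol (2 * k)) - h) ^ 2 ≤ 23 * l2 (A.mulVec z - h) ^ 2 := by
  classical
  intro y z hz
  obtain ⟨S, hScard, -, hzS⟩ := hz
  by_contra hcon
  push_neg at hcon
  have hk2 : 0 < 2 * k := by omega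
  obtain ⟨j0, -⟩ := hstep 0 hk2
  set jfun : ℕ → Fin d := fun i => if hi : i < 2 * k then (hstep i hi).choose else j0
    with hjfun
  have hspec : ∀ i, ∀ _ : i < 2 * k,
      (∀ j : Fin d, |∑ l, A l j * (h - A.mulVec (ysol i)) l| ≤
        |∑ l, A l (jfun i) * (h - A.mulVec (ysol i)) l|) ∧
      J (i + 1) = insert (jfun i) (J i) ∧
      (∀ c : Fin d, c ∉ J (i + 1) → ysol (i + 1) c = 0) ∧
      (∀ zc : Fin d → ℝ, (∀ c : Fin d, c ∉ J (i + 1) → zc c = 0) →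
        l2 (A.mulVec (ysol (i + 1)) - h) ≤ l2 (A.mulVec zc - h)) := by
    intro i hi
    have hj : jfun i = (hstep i hi).choose := by simp only [hjfun]; rw [dif_pos hi]
    rw [hj]
    exact (hstep i hi).choose_spec
  have hcols' : ∀ j : Fin d, Real.sqrt (∑ l, (A l j) ^ 2) = 1 := by
    intro j; have := hcols j; simpa [l2] using this
  have hl2sq : ∀ v : Fin m → ℝ, l2 v ^ 2 = ∑ l, v l ^ 2 := by
    intro v
    simp only [l2]
    exact Real.sq_sqrt (aux_sum_sq_nonneg _ _)
  have hl2nn : ∀ v : Fin m → ℝ, 0 ≤ l2 v := by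
    intro v; simp only [l2]; exact Real.sqrt_nonneg _
  have hcol1 : ∀ j, ∑ l, (A l j) ^ 2 = 1 := by
    intro j
    have h0 : (0:ℝ) ≤ ∑ l, (A l j) ^ 2 := aux_sum_sq_nonneg _ _
    have := hcols' j
    nlinarith [Real.sq_sqrt h0]
  -- basic structural facts
  have hJstep : ∀ n, n < 2 * k → J n ⊆ J (n + 1) := by
    intro n hn
    rw [(hspec n hn).2.1]
    exact Finset.subset_insert _ _
  have hsuppInv : ∀ i, i ≤ 2 * k → ∀ c, c ∉ J i → ysol i c = 0 := by
    intro i hi c hc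
    cases i with
    | zero => rw [hy0]; rfl
    | succ n => exact (hspec n (by omega)).2.2.1 c hc
  have hJmono : ∀ i', i' ≤ 2 * k → ∀ i, i ≤ i' → J i ⊆ J i' := by
    intro i'
    induction i' with
    | zero =>
        intro _ i hi
        have : i = 0 := by omega
        subst this; exact subset_rfl
    | succ n ih =>
        intro hn i hi
        rcases Nat.lt_or_ge i (n + 1) with hlt | hge
        · exact (ih (by omega) i (by omega)).trans (hJstep n (by omega))
        · have : i = n + 1 := by omega
          subst this; exact subset_rfl
  have hOpt : ∀ i, i < 2 * k → ∀ zc : Fin d → ℝ, (∀ c, c ∉ J (i + 1) → zc c = 0) →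
      l2 (A.mulVec (ysol (i + 1)) - h) ≤ l2 (A.mulVec zc - h) := fun i hi => (hspec i hi).2.2.2
  have hMono : ∀ i, i < 2 * k →
      l2 (A.mulVec (ysol (i + 1)) - h) ≤ l2 (A.mulVec (ysol i) - h) := by
    intro i hi
    exact hOpt i hi (ysol i)
      (fun c hc => hsuppInv i (le_of_lt hi) c (fun hm => hc (hJstep i hi hm)))
  have hMono2 : ∀ i', i' ≤ 2 * k → ∀ i, i ≤ i' →
      l2 (A.mulVec (ysol i') - h) ≤ l2 (A.mulVec (ysol i) - h) := by
    intro i'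
    induction i' with
    | zero =>
        intro _ i hi
        have : i = 0 := by omega
        subst this; exact le_rfl
    | succ n ih =>
        intro hn i hi
        rcases Nat.lt_or_ge i (n + 1) with hlt | hge
        · exact (hMono n (by omega)).trans (ih (by omega) i (by omega))
        · have : i = n + 1 := by omega
          subst this; exact le_rfl
  -- the standing assumption, in sum form
  have hHu : ∀ i, i ≤ 2 * k →
      23 * (∑ l, (A.mulVec z - h) l ^ 2) < ∑ l, (A.mulVec (ysol i) - h) l ^ 2 := by
    intro i hi
    have h1 := hMono2 (2 * k) le_rfl i hi
    have h2 : l2 (A.mulVec (ysol (2 * k)) - h) ^ 2 ≤ l2 (A.mulVec (ysol i) - h) ^ 2 :=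
      pow_le_pow_left₀ (hl2nn _) h1 2
    have h3 := lt_of_lt_of_le hcon h2
    rw [hl2sq (A.mulVec z - h), hl2sq (A.mulVec (ysol i) - h)] at h3
    exact h3
  -- orthogonality of the residual to selected columns
  have horthAll : ∀ i, i ≤ 2 * k → ∀ j ∈ J i,
      ∑ l, A l j * (A.mulVec (ysol i) - h) l = 0 := by
    intro i hi j hj
    cases i with
    | zero => rw [hJ0] at hj; exact absurd hj (Finset.notMem_empty _)
    | succ n =>
        have hn : n < 2 * k := by omega
        set c : ℝ := ∑ l, A l j * (A.mulVec (ysol (n + 1)) - h) l with hc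
        set zc : Fin d → ℝ := fun p => ysol (n + 1) p + (if p = j then -c else 0) with hzc
        have hzcsupp : ∀ p, p ∉ J (n + 1) → zc p = 0 := by
          intro p hp
          have h1 : ysol (n + 1) p = 0 := (hspec n hn).2.2.1 p hp
          have h2 : p ≠ j := fun hpj => hp (hpj ▸ hj)
          simp [hzc, h1, h2]
        have hub := hOpt n hn zc hzcsupp
        have hmv : ∀ l, A.mulVec zc l = A.mulVec (ysol (n + 1)) l + A l j * (-c) := by
          intro l
          rw [mulVec_apply', mulVec_apply']
          have hterm : ∀ p, A l p * zc p
              = A l p * ysol (n + 1) p + (if p = j then A l p * (-c) else 0) := by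
            intro p
            by_cases hp : p = j <;> simp [hzc, hp] <;> ring
          rw [Finset.sum_congr rfl (fun p _ => hterm p), Finset.sum_add_distrib,
            Finset.sum_ite_eq' Finset.univ j]
          simp
        have hsubpt : ∀ l, (A.mulVec zc - h) l
            = (A.mulVec (ysol (n + 1)) - h) l + (-c) * A l j := by
          intro l
          simp only [Pi.sub_apply, hmv l]
          ring
        have hsq : ∑ l, (A.mulVec zc - h) l ^ 2
            = (∑ l, (A.mulVec (ysol (n + 1)) - h) l ^ 2) - c ^ 2 := by
          rw [Finset.sum_congr rfl (fun l _ => by rw [hsubpt l])]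
          rw [aux_sum_add_sq]
          have h1 : ∑ l, (A.mulVec (ysol (n + 1)) - h) l * ((-c) * A l j) = -c * c := by
            have hpt : ∀ l, (A.mulVec (ysol (n + 1)) - h) l * ((-c) * A l j)
                = (-c) * (A l j * (A.mulVec (ysol (n + 1)) - h) l) := fun l => by ring
            rw [Finset.sum_congr rfl (fun l _ => hpt l), ← Finset.mul_sum, ← hc]
          have h2 : ∑ l, ((-c) * A l j) ^ 2 = c ^ 2 := by
            have hpt : ∀ l, ((-c) * A l j) ^ 2 = c ^ 2 * (A l j) ^ 2 := fun l => by ring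
            rw [Finset.sum_congr rfl (fun l _ => hpt l), ← Finset.mul_sum, hcol1 j, mul_one]
          rw [h1, h2]
          ring
        have hub2 : ∑ l, (A.mulVec (ysol (n + 1)) - h) l ^ 2
            ≤ ∑ l, (A.mulVec zc - h) l ^ 2 := by
          have h4 : l2 (A.mulVec (ysol (n + 1)) - h) ^ 2 ≤ l2 (A.mulVec zc - h) ^ 2 :=
            pow_le_pow_left₀ (hl2nn _) hub 2
          rw [hl2sq (A.mulVec (ysol (n + 1)) - h), hl2sq (A.mulVec zc - h)] at h4
          exact h4
        have hc2 : c ^ 2 ≤ 0 := by linarith [hsq, hub2]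
        have : c = 0 := by nlinarith [sq_nonneg c]
        exact this
  -- maximality in terms of the (sign-flipped) residual
  have hmaxR : ∀ i, i < 2 * k → ∀ j,
      |∑ l, A l j * (A.mulVec (ysol i) - h) l|
        ≤ |∑ l, A l (jfun i) * (A.mulVec (ysol i) - h) l| := by
    intro i hi j
    have h1 := (hspec i hi).1 j
    have hneg : ∀ j' : Fin d, ∑ l, A l j' * (h - A.mulVec (ysol i)) l
        = -(∑ l, A l j' * (A.mulVec (ysol i) - h) l) := by
      intro j'
      rw [← Finset.sum_neg_distrib]
      apply Finset.sum_congr rfl; intro l _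
      simp only [Pi.sub_apply]
      ring
    rw [hneg j, hneg (jfun i), abs_neg, abs_neg] at h1
    exact h1
  -- support of z
  set S' : Finset (Fin d) := Finset.univ.filter (fun j => z j ≠ 0) with hS'
  have hzsupp : ∀ j, j ∉ S' → z j = 0 := by
    intro j hj
    by_contra hz
    exact hj (by rw [hS']; simp [hz])
  have hS'k : S'.card ≤ k := by
    have hsub : S' ⊆ S := by
      intro j hj
      have hz : z j ≠ 0 := by rw [hS'] at hj; simpa using hj
      by_contra hjS
      exact hz (by rw [hzS j, if_neg hjS])
    calc S'.card ≤ S.card := Finset.card_le_card hsub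
      _ = min k d := hScard
      _ ≤ k := min_le_left _ _
  have hVne : ∀ i, i ≤ 2 * k → ∃ v, v ∈ S' ∧ v ∉ J i := by
    intro i hi
    by_contra hcv
    push_neg at hcv
    have hzJ : ∀ p, p ∉ J i → z p = 0 := by
      intro p hp
      by_contra hzp
      exact hp (hcv p (by rw [hS']; simp [hzp]))
    have hle : ∑ l, (A.mulVec (ysol i) - h) l ^ 2 ≤ ∑ l, (A.mulVec z - h) l ^ 2 := by
      cases i with
      | zero =>
          have hz0 : z = ysol 0 := by
            funext p
            have h01 : z p = 0 := hzJ p (by rw [hJ0]; exact Finset.notMem_empty _)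
            rw [hy0, h01]
            rfl
          rw [hz0]
      | succ n =>
          have h1 := hOpt n (by omega) z hzJ
          have h4 : l2 (A.mulVec (ysol (n + 1)) - h) ^ 2 ≤ l2 (A.mulVec z - h) ^ 2 :=
            pow_le_pow_left₀ (hl2nn _) h1 2
          rw [hl2sq (A.mulVec (ysol (n + 1)) - h), hl2sq (A.mulVec z - h)] at h4
          exact h4
    have h2 := hHu i hi
    have h3 : 0 ≤ ∑ l, (A.mulVec z - h) l ^ 2 := aux_sum_sq_nonneg _ _
    linarith
  -- the selected index is always new
  have hnotJ : ∀ i, i < 2 * k → jfun i ∉ J i := by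
    intro i hi hmem
    have hc0 : ∑ l, A l (jfun i) * (A.mulVec (ysol i) - h) l = 0 :=
      horthAll i (le_of_lt hi) _ hmem
    have hall : ∀ j, ∑ l, A l j * (A.mulVec (ysol i) - h) l = 0 := by
      intro j
      have h1 := hmaxR i hi j
      rw [hc0] at h1
      simp only [abs_zero] at h1
      exact abs_eq_zero.mp (le_antisymm h1 (abs_nonneg _))
    have hdec : ∀ l, (A.mulVec z - h) l
        = (A.mulVec (ysol i) - h) l + (A.mulVec (z - ysol i)) l := by
      intro l
      rw [Matrix.mulVec_sub]
      simp only [Pi.sub_apply]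
      ring
    have hzero : ∑ l, (A.mulVec (ysol i) - h) l * (A.mulVec (z - ysol i)) l = 0 := by
      have hsw := dot_mulVec A (z - ysol i) (A.mulVec (ysol i) - h)
      have h0 : ∑ l, (A.mulVec (z - ysol i)) l * (A.mulVec (ysol i) - h) l = 0 := by
        rw [hsw]
        apply Finset.sum_eq_zero; intro j _
        rw [hall j, mul_zero]
      calc ∑ l, (A.mulVec (ysol i) - h) l * (A.mulVec (z - ysol i)) l
          = ∑ l, (A.mulVec (z - ysol i)) l * (A.mulVec (ysol i) - h) l :=
            Finset.sum_congr rfl fun l _ => mul_comm _ _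
        _ = 0 := h0
    have hid : ∑ l, (A.mulVec z - h) l ^ 2
        = (∑ l, (A.mulVec (ysol i) - h) l ^ 2) + ∑ l, (A.mulVec (z - ysol i)) l ^ 2 := by
      rw [Finset.sum_congr rfl (fun l _ => by rw [hdec l])]
      rw [aux_sum_add_sq, hzero]
      ring
    have h2 := hHu i (le_of_lt hi)
    have h3 : 0 ≤ ∑ l, (A.mulVec (z - ysol i)) l ^ 2 := aux_sum_sq_nonneg _ _
    have h4 : 0 ≤ ∑ l, (A.mulVec z - h) l ^ 2 := aux_sum_sq_nonneg _ _
    linarith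
  -- consequences
  have hJcard : ∀ i, i ≤ 2 * k → (J i).card = i := by
    intro i
    induction i with
    | zero => intro _; rw [hJ0]; rfl
    | succ n ih =>
        intro hn
        rw [(hspec n (by omega)).2.1,
          Finset.card_insert_of_notMem (hnotJ n (by omega)), ih (by omega)]
  have hJchar : ∀ i, i ≤ 2 * k → ∀ j' ∈ J i, ∃ i', i' < i ∧ jfun i' = j' := by
    intro i
    induction i with
    | zero => intro _ j' hj'; rw [hJ0] at hj'; exact absurd hj' (Finset.notMem_empty _)
    | succ n ih =>
        intro hn j' hj'
        rw [(hspec n (by omega)).2.1] at hj'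
        rcases Finset.mem_insert.mp hj' with h1 | h1
        · exact ⟨n, by omega, h1.symm⟩
        · obtain ⟨i', hi', he⟩ := ih (by omega) j' h1
          exact ⟨i', by omega, he⟩
  have hinj : ∀ i1, i1 < 2 * k → ∀ i2, i2 < 2 * k → i1 ≠ i2 → jfun i1 ≠ jfun i2 := by
    have key : ∀ i1 i2, i1 < i2 → i2 < 2 * k → jfun i1 ≠ jfun i2 := by
      intro i1 i2 h12 h2 he
      apply hnotJ i2 h2
      rw [← he]
      have h1 : jfun i1 ∈ J (i1 + 1) := by
        rw [(hspec i1 (by omega)).2.1]; exact Finset.mem_insert_self _ _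
      exact hJmono i2 (le_of_lt h2) (i1 + 1) (by omega) h1
    intro i1 h1 i2 h2 hne
    rcases Nat.lt_or_ge i1 i2 with hlt | hge
    · exact key i1 i2 hlt h2
    · have hlt2 : i2 < i1 := by omega
      exact fun he => key i2 i1 hlt2 h1 he.symm
  -- counting of correct and wrong selections
  set Cs : Finset ℕ := (Finset.range (2 * k)).filter (fun i => jfun i ∈ S') with hCsdef
  set Ds : Finset ℕ := (Finset.range (2 * k)).filter (fun i => jfun i ∉ S') with hDsdef
  have hCD : Cs.card + Ds.card = 2 * k := by
    rw [hCsdef, hDsdef, Finset.card_filter_add_card_filter_not (fun i => jfun i ∈ S'),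
      Finset.card_range]
  have hCcard : Cs.card < S'.card := by
    obtain ⟨v, hvS, hvJ⟩ := hVne (2 * k) le_rfl
    have hmapsto : ∀ i ∈ Cs, jfun i ∈ S'.erase v := by
      intro i hi
      obtain ⟨hir, hiS⟩ := Finset.mem_filter.mp hi
      have hir' : i < 2 * k := Finset.mem_range.mp hir
      apply Finset.mem_erase.mpr
      refine ⟨?_, hiS⟩
      intro he
      apply hvJ
      rw [← he]
      have h1 : jfun i ∈ J (i + 1) := by
        rw [(hspec i hir').2.1]; exact Finset.mem_insert_self _ _
      exact hJmono (2 * k) le_rfl (i + 1) (by omega) h1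
    have hinjOn : ∀ i1 ∈ Cs, ∀ i2 ∈ Cs, jfun i1 = jfun i2 → i1 = i2 := by
      intro i1 hi1 i2 hi2 he
      by_contra hne
      exact hinj i1 (Finset.mem_range.mp (Finset.mem_of_mem_filter i1 hi1)) i2
        (Finset.mem_range.mp (Finset.mem_of_mem_filter i2 hi2)) hne he
    have h1 := Finset.card_le_card_of_injOn jfun hmapsto hinjOn
    have h2 : (S'.erase v).card = S'.card - 1 := Finset.card_erase_of_mem hvS
    have h3 : 1 ≤ S'.card := Finset.card_pos.mpr ⟨v, hvS⟩
    omega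
  have hDcard : k + 1 ≤ Ds.card := by omega
  set D' : Finset ℕ := Ds.filter (fun i => (Ds.filter (· < i)).card ≤ k) with hD'def
  have hD'le : D'.card ≤ k + 1 := by
    by_contra hgt
    push_neg at hgt
    have hne : D'.Nonempty := Finset.card_pos.mp (by omega)
    have hmaxmem := D'.max'_mem hne
    have hsub : D'.erase (D'.max' hne) ⊆ Ds.filter (· < D'.max' hne) := by
      intro x hx
      obtain ⟨hxne, hxD⟩ := Finset.mem_erase.mp hx
      refine Finset.mem_filter.mpr ⟨Finset.mem_of_mem_filter x hxD, ?_⟩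
      have := Finset.le_max' D' x hxD
      omega
    have h1 : D'.card - 1 ≤ (Ds.filter (· < D'.max' hne)).card := by
      rw [← Finset.card_erase_of_mem hmaxmem]
      exact Finset.card_le_card hsub
    have h2 : (Ds.filter (· < D'.max' hne)).card ≤ k := (Finset.mem_filter.mp hmaxmem).2
    omega
  have hD'ge : k + 1 ≤ D'.card := by
    by_contra hlt
    push_neg at hlt
    set B : Finset ℕ := Ds.filter (fun i => ¬ (Ds.filter (· < i)).card ≤ k) with hBdef
    have hBcard : D'.card + B.card = Ds.card := by
      rw [hD'def, hBdef]
      exact Finset.card_filter_add_card_filter_not _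
    have hBne : B.Nonempty := Finset.card_pos.mp (by omega)
    have hi0B := B.min'_mem hBne
    have hi0cond : k + 1 ≤ (Ds.filter (· < B.min' hBne)).card := by
      have := (Finset.mem_filter.mp hi0B).2
      omega
    have hsub : Ds.filter (· < B.min' hBne) ⊆ D' := by
      intro x hx
      obtain ⟨hxD, hxlt⟩ := Finset.mem_filter.mp hx
      refine Finset.mem_filter.mpr ⟨hxD, ?_⟩
      by_contra hxk
      have hxB : x ∈ B := Finset.mem_filter.mpr ⟨hxD, hxk⟩
      have := B.min'_le x hxB
      omega
    have := Finset.card_le_card hsub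
    omega
  -- per-step fuel bound
  have hstepb : ∀ i ∈ D', 1.05 * Real.sqrt (∑ l, (A.mulVec z - h) l ^ 2)
      < |∑ l, A l (jfun i) * (A.mulVec z - h) l| * Real.sqrt (k : ℝ) := by
    intro i hiD'
    have hiDs : i ∈ Ds := Finset.mem_of_mem_filter i hiD'
    have hi2k : i < 2 * k := Finset.mem_range.mp (Finset.mem_of_mem_filter i hiDs)
    have hjS' : jfun i ∉ S' := (Finset.mem_filter.mp hiDs).2
    have hqk : (Ds.filter (· < i)).card ≤ k := (Finset.mem_filter.mp hiD').2
    have hJS : (J i \ S').card ≤ k := by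
      have hsub : J i \ S' ⊆ (Ds.filter (· < i)).image jfun := by
        intro j' hj'
        obtain ⟨hj'J, hj'S⟩ := Finset.mem_sdiff.mp hj'
        obtain ⟨i', hi'lt, hi'e⟩ := hJchar i (by omega) j' hj'J
        apply Finset.mem_image.mpr
        refine ⟨i', ?_, hi'e⟩
        apply Finset.mem_filter.mpr
        refine ⟨?_, hi'lt⟩
        apply Finset.mem_filter.mpr
        refine ⟨Finset.mem_range.mpr (by omega), ?_⟩
        rw [hi'e]
        exact hj'S
      calc (J i \ S').card ≤ ((Ds.filter (· < i)).image jfun).card := Finset.card_le_card hsub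
        _ ≤ (Ds.filter (· < i)).card := Finset.card_image_le
        _ ≤ k := hqk
    have hcardT : (S' ∪ J i).card ≤ 2 * k := by
      have h1 : S' ∪ J i = S' ∪ (J i \ S') := (Finset.union_sdiff_self_eq_union).symm
      rw [h1, Finset.card_union_of_disjoint Finset.disjoint_sdiff]
      omega
    have hwsupp : ∀ j, j ∉ S' ∪ J i → (z - ysol i) j = 0 := by
      intro j hj
      have h1 : j ∉ S' := fun hc => hj (Finset.mem_union_left _ hc)
      have h2 : j ∉ J i := fun hc => hj (Finset.mem_union_right _ hc)
      simp [Pi.sub_apply, hzsupp j h1, hsuppInv i (by omega) j h2]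
    have hRe : ∀ l, (A.mulVec z - h) l
        = (A.mulVec (ysol i) - h) l + ∑ j ∈ S' ∪ J i, (z - ysol i) j * A l j := by
      intro l
      rw [← mulVec_restrict A (S' ∪ J i) (z - ysol i) hwsupp l, Matrix.mulVec_sub]
      simp only [Pi.sub_apply]
      ring
    have hjsT : jfun i ∉ S' ∪ J i := by
      intro hc
      rcases Finset.mem_union.mp hc with hc1 | hc2
      · exact hjS' hc1
      · exact hnotJ i hi2k hc2
    exact step_bound A k hk hcols' hcoh S' (J i) hS'k hcardT (z - ysol i) hwsupp
      (A.mulVec (ysol i) - h) (A.mulVec z - h) hRe (jfun i) hjsT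
      (horthAll i (by omega)) (hmaxR i hi2k) (hHu i (by omega))
  -- final contradiction via the capacity bound
  have hεsq0 : (0:ℝ) ≤ ∑ l, (A.mulVec z - h) l ^ 2 := aux_sum_sq_nonneg _ _
  have hkR : (0:ℝ) < (k:ℝ) := by positivity
  have hterm : ∀ i ∈ D', 1.1025 * (∑ l, (A.mulVec z - h) l ^ 2) / (k:ℝ)
      < (∑ l, A l (jfun i) * (A.mulVec z - h) l) ^ 2 := by
    intro i hi
    have h1 := hstepb i hi
    have ha0 : (0:ℝ) ≤ |∑ l, A l (jfun i) * (A.mulVec z - h) l| := abs_nonneg _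
    have h2 := mul_self_lt_mul_self (by positivity) h1
    have hkk : Real.sqrt (k:ℝ) * Real.sqrt (k:ℝ) = (k:ℝ) :=
      Real.mul_self_sqrt (le_of_lt hkR)
    have hee : Real.sqrt (∑ l, (A.mulVec z - h) l ^ 2)
        * Real.sqrt (∑ l, (A.mulVec z - h) l ^ 2) = ∑ l, (A.mulVec z - h) l ^ 2 :=
      Real.mul_self_sqrt hεsq0
    have h3 : (∑ l, A l (jfun i) * (A.mulVec z - h) l) ^ 2
        = |∑ l, A l (jfun i) * (A.mulVec z - h) l| ^ 2 := (sq_abs _).symm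
    rw [h3, div_lt_iff₀ hkR]
    nlinarith [h2, hkk, hee]
  have hD'inj : ∀ i1 ∈ D', ∀ i2 ∈ D', jfun i1 = jfun i2 → i1 = i2 := by
    intro i1 hi1 i2 hi2 he
    by_contra hne
    have hm1 : i1 < 2 * k := Finset.mem_range.mp
      (Finset.mem_of_mem_filter i1 (Finset.mem_of_mem_filter i1 hi1))
    have hm2 : i2 < 2 * k := Finset.mem_range.mp
      (Finset.mem_of_mem_filter i2 (Finset.mem_of_mem_filter i2 hi2))
    exact hinj i1 hm1 i2 hm2 hne he
  have himg : ∑ i ∈ D', (∑ l, A l (jfun i) * (A.mulVec z - h) l) ^ 2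
      = ∑ j' ∈ D'.image jfun, (∑ l, A l j' * (A.mulVec z - h) l) ^ 2 := by
    rw [Finset.sum_image hD'inj]
  have himgcard : (D'.image jfun).card ≤ k + 1 := le_trans Finset.card_image_le hD'le
  have hcap : ∑ j' ∈ D'.image jfun, (∑ l, A l j' * (A.mulVec z - h) l) ^ 2
      ≤ (1 + 0.1) * ∑ l, (A.mulVec z - h) l ^ 2 := by
    apply capacity A k hk hcols' hcoh _ 0.1 (by norm_num) _ _
    have hc1 : ((D'.image jfun).card : ℝ) ≤ (k:ℝ) + 1 := by exact_mod_cast himgcard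
    have hc2 : ((D'.image jfun).card : ℝ) - 1 ≤ (k:ℝ) := by linarith
    calc (((D'.image jfun).card : ℝ) - 1) * (0.1 / (k:ℝ))
        ≤ (k:ℝ) * (0.1 / (k:ℝ)) := mul_le_mul_of_nonneg_right hc2 (by positivity)
      _ = 0.1 := by field_simp
  have hlow : 1.1 * (∑ l, (A.mulVec z - h) l ^ 2)
      < ∑ i ∈ D', (∑ l, A l (jfun i) * (A.mulVec z - h) l) ^ 2 := by
    have hne : D'.Nonempty := Finset.card_pos.mp (by omega)
    have h1 := Finset.sum_lt_sum_of_nonempty hne hterm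
    have h2 : ∑ _i ∈ D', 1.1025 * (∑ l, (A.mulVec z - h) l ^ 2) / (k:ℝ)
        = (D'.card : ℝ) * (1.1025 * (∑ l, (A.mulVec z - h) l ^ 2) / (k:ℝ)) := by
      rw [Finset.sum_const, nsmul_eq_mul]
    have hD : ((k:ℝ) + 1) ≤ (D'.card : ℝ) := by exact_mod_cast hD'ge
    have h3 : 1.1 * (∑ l, (A.mulVec z - h) l ^ 2)
        ≤ (D'.card : ℝ) * (1.1025 * (∑ l, (A.mulVec z - h) l ^ 2) / (k:ℝ)) := by
      have h4 : ((k:ℝ) + 1) * (1.1025 * (∑ l, (A.mulVec z - h) l ^ 2) / (k:ℝ))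
          ≤ (D'.card : ℝ) * (1.1025 * (∑ l, (A.mulVec z - h) l ^ 2) / (k:ℝ)) :=
        mul_le_mul_of_nonneg_right hD (by positivity)
      have h5 : 1.1 * (∑ l, (A.mulVec z - h) l ^ 2)
          ≤ ((k:ℝ) + 1) * (1.1025 * (∑ l, (A.mulVec z - h) l ^ 2) / (k:ℝ)) := by
        rw [show ((k:ℝ) + 1) * (1.1025 * (∑ l, (A.mulVec z - h) l ^ 2) / (k:ℝ))
            = (1.1025 * (∑ l, (A.mulVec z - h) l ^ 2)) * (((k:ℝ) + 1) / (k:ℝ)) by ring]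
        have h6 : (1:ℝ) ≤ ((k:ℝ) + 1) / (k:ℝ) := by
          rw [le_div_iff₀ hkR]; linarith
        nlinarith [hεsq0, h6]
      linarith
    calc 1.1 * (∑ l, (A.mulVec z - h) l ^ 2)
        ≤ (D'.card : ℝ) * (1.1025 * (∑ l, (A.mulVec z - h) l ^ 2) / (k:ℝ)) := h3
      _ = ∑ _i ∈ D', 1.1025 * (∑ l, (A.mulVec z - h) l ^ 2) / (k:ℝ) := h2.symm
      _ < _ := h1
  rw [himg] at hlow
  have hnum : (1:ℝ) + 0.1 = 1.1 := by norm_num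
  linarith [hcap, hlow]
end

section
/- Let A = [a₁ | … | a_d] ∈ ℝ^{m×d} have unit ℓ₂-norm columns, let h ∈ ℝ^m, and let k be a positive integer. Suppose r^{(0)}, r^{(1)}, …, r^{(k)} ∈ ℝ^m and indices j₀, …, j_{k−1} ∈ {1,…,d} satisfy r^{(0)} = h and, for each 0 ≤ i < k, ‖r^{(i+1)}‖₂ ≤ ‖r^{(i)} − (a_{j_i}ᵀ r^{(i)})·a_{j_i}‖₂ (as holds for the residuals of Orthogonal Matching Pursuit, where r^{(i+1)} is the residual after least-squares fitting of h on the columns selected through step i). Then there exists some 0 ≤ i < k such that (a_{j_i}ᵀ r^{(i)})² ≤ ‖h‖₂²/k. -/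
open Real MeasureTheory ProbabilityTheory

lemma l2_sq {n : ℕ} (v : Fin n → ℝ) : l2 v ^ 2 = ∑ i, v i ^ 2 := by
  rw [l2, Real.sq_sqrt]
  positivity

lemma l2_nonneg {n : ℕ} (v : Fin n → ℝ) : 0 ≤ l2 v := Real.sqrt_nonneg _

/-- Lemma 1, some OMP step makes small progress. -/
theorem stmt_4 {m d k : ℕ} (hk : 0 < k)
    (A : Matrix (Fin m) (Fin d) ℝ) (h : Fin m → ℝ)
    (hcols : ∀ j : Fin d, l2 (fun i => A i j) = 1)
    (r : ℕ → Fin m → ℝ) (j : ℕ → Fin d)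
    (hr0 : r 0 = h)
    (hstep : ∀ i < k,
      l2 (r (i + 1)) ≤
        l2 (fun l => r i l - (∑ l', A l' (j i) * r i l') * A l (j i))) :
    ∃ i < k, (∑ l, A l (j i) * r i l) ^ 2 ≤ l2 h ^ 2 / k := by
  by_contra hc
  push_neg at hc
  set c : ℕ → ℝ := fun i => (∑ l, A l (j i) * r i l) ^ 2 with hcdef
  -- key step inequality on squared norms
  have key : ∀ i < k, l2 (r (i+1)) ^ 2 ≤ l2 (r i) ^ 2 - c i := by
    intro i hi
    have hA : ∑ l, A l (j i) ^ 2 = 1 := by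
      have := hcols (j i)
      have h2 := congrArg (· ^ 2) this
      simpa [l2_sq] using h2
    have hexp : l2 (fun l => r i l - (∑ l', A l' (j i) * r i l') * A l (j i)) ^ 2
        = l2 (r i) ^ 2 - c i := by
      rw [l2_sq, l2_sq]
      set s := ∑ l', A l' (j i) * r i l' with hs
      have : ∀ l, (r i l - s * A l (j i)) ^ 2
          = r i l ^ 2 - 2 * s * (A l (j i) * r i l) + s ^ 2 * A l (j i) ^ 2 := by
        intro l; ring
      rw [Finset.sum_congr rfl fun l _ => this l]
      rw [Finset.sum_add_distrib, Finset.sum_sub_distrib, ← Finset.mul_sum,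
        ← Finset.mul_sum, hA]
      simp only [hcdef]
      ring
    have h1 := hstep i hi
    calc l2 (r (i+1)) ^ 2 ≤ l2 (fun l => r i l - (∑ l', A l' (j i) * r i l') * A l (j i)) ^ 2 :=
          pow_le_pow_left₀ (l2_nonneg _) h1 2
      _ = l2 (r i) ^ 2 - c i := hexp
  -- induction: sum bound
  have sum_bound : ∀ n ≤ k, l2 (r n) ^ 2 ≤ l2 h ^ 2 - ∑ i ∈ Finset.range n, c i := by
    intro n hn
    induction n with
    | zero => simp [hr0]
    | succ p ih =>
      have hp : p < k := hn
      have := key p hp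
      have ihp := ih (le_of_lt hp)
      rw [Finset.sum_range_succ]
      linarith
  have hfinal := sum_bound k le_rfl
  have hbig : l2 h ^ 2 < ∑ i ∈ Finset.range k, c i := by
    have : ∀ i ∈ Finset.range k, l2 h ^ 2 / k < c i := by
      intro i hi
      exact hc i (Finset.mem_range.mp hi)
    have := Finset.sum_lt_sum_of_nonempty (Finset.nonempty_range_iff.mpr hk.ne') this
    rw [Finset.sum_const, Finset.card_range, nsmul_eq_mul] at this
    have hkpos : (0:ℝ) < k := Nat.cast_pos.mpr hk
    calc l2 h ^ 2 = k * (l2 h ^ 2 / k) := by field_simp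
      _ < _ := this
  have := sq_nonneg (l2 (r k))
  rw [sq] at this
  nlinarith [l2_nonneg (r k), hfinal, hbig]
end

section
/- Let A = [a₁ | … | a_d] ∈ ℝ^{m×d} have unit ℓ₂-norm columns, let k ≥ 2, let δ ∈ (0,1), and suppose the coherence satisfies μ(A) ≤ δ/(k−1). Then for every k-sparse vector y ∈ ℝ^d, ‖Ay‖₂² ≥ (1 − δ)·‖y‖₂². -/
open Real MeasureTheory ProbabilityTheory

/-- Lemma 2, low coherence implies near-isometry on sparse vectors. -/
theorem stmt_5 {m d k : ℕ} (hk : 2 ≤ k)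
    (A : Matrix (Fin m) (Fin d) ℝ)
    (hcols : ∀ j : Fin d, l2 (fun i => A i j) = 1)
    {δ : ℝ} (hδ0 : 0 < δ) (hδ1 : δ < 1)
    (hcoh : ∀ j j' : Fin d, j ≠ j' → |∑ i, A i j * A i j'| ≤ δ / ((k : ℝ) - 1)) :
    ∀ y : Fin d → ℝ, Sparse k y → (1 - δ) * l2 y ^ 2 ≤ l2 (A.mulVec y) ^ 2 := by
  intro y hy
  set μ : ℝ := δ / ((k : ℝ) - 1) with hμ
  have hk2 : (2 : ℝ) ≤ (k : ℝ) := by exact_mod_cast hk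
  have hk1 : (0 : ℝ) < (k : ℝ) - 1 := by linarith
  have hμ0 : 0 ≤ μ := div_nonneg hδ0.le hk1.le
  have hcolsq : ∀ j, (∑ i, A i j ^ 2) = 1 := by
    intro j
    have h := hcols j
    rw [l2] at h
    have := Real.sqrt_eq_one.mp h
    simpa using this
  -- expansion
  have hexp : l2 (A.mulVec y) ^ 2
      = ∑ j, ∑ j', y j * y j' * ∑ i, A i j * A i j' := by
    rw [l2_sq]
    simp only [Matrix.mulVec, dotProduct]
    calc ∑ i, (∑ j, A i j * y j) ^ 2
        = ∑ i, ∑ j, ∑ j', (A i j * y j) * (A i j' * y j') := by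
          refine Finset.sum_congr rfl fun i _ => ?_
          rw [sq, Finset.sum_mul_sum]
      _ = ∑ j, ∑ j', y j * y j' * ∑ i, A i j * A i j' := by
          rw [Finset.sum_comm]
          refine Finset.sum_congr rfl fun j _ => ?_
          rw [Finset.sum_comm]
          refine Finset.sum_congr rfl fun j' _ => ?_
          rw [Finset.mul_sum]
          exact Finset.sum_congr rfl fun i _ => by ring
  -- split diagonal
  have hsplit : l2 (A.mulVec y) ^ 2
      = (∑ j, y j ^ 2)
        + ∑ j, ∑ j' ∈ Finset.univ.erase j, y j * y j' * ∑ i, A i j * A i j' := by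
    rw [hexp, ← Finset.sum_add_distrib]
    refine Finset.sum_congr rfl fun j _ => ?_
    rw [← Finset.add_sum_erase _ _ (Finset.mem_univ j)]
    congr 1
    have h1 : ∑ i, A i j * A i j = 1 := by simpa [sq] using hcolsq j
    rw [h1]; ring
  -- bound each off-diagonal term
  have hoff : ∀ j : Fin d, ∀ j' ∈ Finset.univ.erase j,
      -(μ * (|y j| * |y j'|)) ≤ y j * y j' * ∑ i, A i j * A i j' := by
    intro j j' hj'
    have hne : j ≠ j' := (Finset.ne_of_mem_erase hj').symm
    have h1 : |y j * y j' * ∑ i, A i j * A i j'| ≤ |y j| * |y j'| * μ := by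
      rw [abs_mul, abs_mul]
      exact mul_le_mul_of_nonneg_left (hcoh j j' hne)
        (mul_nonneg (abs_nonneg _) (abs_nonneg _))
    nlinarith [neg_abs_le (y j * y j' * ∑ i, A i j * A i j')]
  have hoffsum :
      -(μ * ∑ j, ∑ j' ∈ Finset.univ.erase j, |y j| * |y j'|)
        ≤ ∑ j, ∑ j' ∈ Finset.univ.erase j, y j * y j' * ∑ i, A i j * A i j' := by
    rw [Finset.mul_sum, ← Finset.sum_neg_distrib]
    refine Finset.sum_le_sum fun j _ => ?_
    rw [Finset.mul_sum, ← Finset.sum_neg_distrib]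
    exact Finset.sum_le_sum (hoff j)
  -- abs cross sum equals (∑|y|)^2 - ∑ y^2
  have habs : ∑ j, ∑ j' ∈ Finset.univ.erase j, |y j| * |y j'|
      = (∑ j, |y j|) ^ 2 - ∑ j, y j ^ 2 := by
    have h : (∑ j, |y j|) ^ 2 = ∑ j, ∑ j', |y j| * |y j'| := by
      rw [sq, Finset.sum_mul_sum]
    rw [h]
    rw [eq_sub_iff_add_eq, ← Finset.sum_add_distrib]
    refine Finset.sum_congr rfl fun j _ => ?_
    rw [← Finset.add_sum_erase _ _ (Finset.mem_univ j)]
    rw [← abs_mul, ← sq, abs_sq]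
    ring
  -- Cauchy-Schwarz on the support
  have hcs : (∑ j, |y j|) ^ 2 ≤ (k : ℝ) * ∑ j, y j ^ 2 := by
    set T := Finset.univ.filter fun i => y i ≠ 0 with hT
    have h1 : (∑ j, |y j|) = ∑ j ∈ T, |y j| * 1 := by
      rw [Finset.sum_filter]
      refine Finset.sum_congr rfl fun j _ => ?_
      by_cases h : y j = 0 <;> simp [h]
    have h2 : (∑ j ∈ T, |y j| * 1) ^ 2 ≤ (∑ j ∈ T, |y j| ^ 2) * ∑ j ∈ T, (1:ℝ) ^ 2 :=
      Finset.sum_mul_sq_le_sq_mul_sq T _ _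
    have h3 : (∑ j ∈ T, |y j| ^ 2) ≤ ∑ j, y j ^ 2 := by
      refine Finset.sum_le_sum_of_subset_of_nonneg (Finset.filter_subset _ _)
        (fun j _ _ => sq_nonneg _) |>.trans_eq ?_ |>.trans_eq rfl
      exact Finset.sum_congr rfl fun j _ => by rw [sq_abs]
    have h4 : (∑ j ∈ T, (1:ℝ) ^ 2) ≤ (k : ℝ) := by
      simp only [one_pow, Finset.sum_const, nsmul_eq_mul, mul_one]
      exact_mod_cast hy
    have hsumnn : 0 ≤ ∑ j, y j ^ 2 := Finset.sum_nonneg fun j _ => sq_nonneg _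
    calc (∑ j, |y j|) ^ 2 = (∑ j ∈ T, |y j| * 1) ^ 2 := by rw [h1]
      _ ≤ (∑ j ∈ T, |y j| ^ 2) * ∑ j ∈ T, (1:ℝ) ^ 2 := h2
      _ ≤ (∑ j, y j ^ 2) * (k : ℝ) := by
          refine mul_le_mul h3 h4 (Finset.sum_nonneg fun j _ => sq_nonneg _) hsumnn
      _ = (k : ℝ) * ∑ j, y j ^ 2 := mul_comm _ _
  -- combine
  have hly : l2 y ^ 2 = ∑ j, y j ^ 2 := l2_sq y
  have hμk : μ * ((k : ℝ) - 1) = δ := div_mul_cancel₀ δ hk1.ne'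
  rw [hly, hsplit]
  have key : μ * ((∑ j, |y j|) ^ 2 - ∑ j, y j ^ 2) ≤ δ * ∑ j, y j ^ 2 := by
    calc μ * ((∑ j, |y j|) ^ 2 - ∑ j, y j ^ 2)
        ≤ μ * (((k : ℝ) - 1) * ∑ j, y j ^ 2) := by
          refine mul_le_mul_of_nonneg_left ?_ hμ0
          nlinarith
      _ = δ * ∑ j, y j ^ 2 := by rw [← mul_assoc, hμk]
  have := hoffsum
  rw [habs] at this
  linarith
end

section
/- Fix real numbers λ₁ ≥ λ₂ ≥ … ≥ λ_D > 0, and let X₁, …, X_D be i.i.d. chi-squared random variables with one degree of freedom (i.e., X_i = Z_i² where Z₁,…,Z_D are i.i.d. standard Gaussian). Then for any 0 < γ < 1, Pr[ Σ_{i=1}^D λ_i X_i > (1 + γ)·Σ_{i=1}^D λ_i ] ≤ exp( −(D γ²/24)·(λ̄/λ₁) ), where λ̄ = (λ₁ + … + λ_D)/D. -/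
open Real MeasureTheory ProbabilityTheory

lemma gaussianReal_std_eq :
    gaussianReal 0 1 = MeasureTheory.volume.withDensity
      (fun x => ((Real.toNNReal (ProbabilityTheory.gaussianPDFReal 0 1 x)) : ENNReal)) := by
  rw [ProbabilityTheory.gaussianReal_of_var_ne_zero 0 one_ne_zero]
  rfl

lemma pdf_mul_exp (c : ℝ) (x : ℝ) :
    gaussianPDFReal 0 1 x * Real.exp (c * x ^ 2)
      = (Real.sqrt (2 * π))⁻¹ * Real.exp (-(1/2 - c) * x ^ 2) := by
  simp only [gaussianPDFReal, NNReal.coe_one, mul_one, sub_zero]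
  rw [mul_assoc, ← Real.exp_add]
  ring_nf

lemma integrable_smul_exp (c : ℝ) (hc : c < 1/2) :
    Integrable (fun x => gaussianPDFReal 0 1 x * Real.exp (c * x ^ 2)) := by
  simp only [pdf_mul_exp]
  exact (integrable_exp_neg_mul_sq (by linarith : (0:ℝ) < 1/2 - c)).const_mul _

lemma sqrt_algebra (c : ℝ) (hc : c < 1/2) :
    (Real.sqrt (2 * π))⁻¹ * Real.sqrt (π / (1/2 - c)) = (Real.sqrt (1 - 2*c))⁻¹ := by
  have hb : (0:ℝ) < 1/2 - c := by linarith
  have hπ : (0:ℝ) < π := Real.pi_pos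
  rw [← Real.sqrt_inv, ← Real.sqrt_mul (by positivity), ← Real.sqrt_inv]
  congr 1
  have h1 : (1/2 - c) ≠ 0 := ne_of_gt hb
  have h2 : (2*π) ≠ 0 := by positivity
  have h3 : (1 - 2*c) ≠ 0 := by intro h; apply h1; linarith
  field_simp

lemma integral_exp_mul_sq_gaussian (c : ℝ) (hc : c < 1/2) :
    ∫ x, Real.exp (c * x ^ 2) ∂(gaussianReal 0 1) = (Real.sqrt (1 - 2*c))⁻¹ := by
  rw [gaussianReal_std_eq,
    integral_withDensity_eq_integral_smul
      ((ProbabilityTheory.measurable_gaussianPDFReal 0 1).real_toNNReal) _]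
  have : ∀ x : ℝ, Real.toNNReal (gaussianPDFReal 0 1 x) • Real.exp (c * x ^ 2)
      = (Real.sqrt (2 * π))⁻¹ * Real.exp (-(1/2 - c) * x ^ 2) := by
    intro x
    rw [NNReal.smul_def, Real.coe_toNNReal _ (gaussianPDFReal_nonneg 0 1 x), smul_eq_mul, pdf_mul_exp]
  simp only [this]
  rw [MeasureTheory.integral_const_mul, integral_gaussian]
  exact sqrt_algebra c hc

lemma integrable_exp_mul_sq_gaussian (c : ℝ) (hc : c < 1/2) :
    Integrable (fun x => Real.exp (c * x ^ 2)) (gaussianReal 0 1) := by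
  rw [gaussianReal_std_eq,
    integrable_withDensity_iff_integrable_smul
      ((ProbabilityTheory.measurable_gaussianPDFReal 0 1).real_toNNReal)]
  have : ∀ x : ℝ, Real.toNNReal (gaussianPDFReal 0 1 x) • Real.exp (c * x ^ 2)
      = (Real.sqrt (2 * π))⁻¹ * Real.exp (-(1/2 - c) * x ^ 2) := by
    intro x
    rw [NNReal.smul_def, Real.coe_toNNReal _ (gaussianPDFReal_nonneg 0 1 x), smul_eq_mul,
      pdf_mul_exp]
  simp only [this]
  exact (integrable_exp_neg_mul_sq (by linarith : (0:ℝ) < 1/2 - c)).const_mul _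

lemma key_ineq {u : ℝ} (h0 : 0 ≤ u) (h2 : u ≤ 1/2) :
    (Real.sqrt (1 - u))⁻¹ ≤ Real.exp (u/2 + u^2) := by
  have h1 : (0:ℝ) < 1 - u := by linarith
  have hlog : -Real.log (1-u) ≤ u + 2*u^2 := by
    have hl := Real.log_le_sub_one_of_pos (inv_pos.mpr h1)
    rw [Real.log_inv] at hl
    have h' : u / (1-u) ≤ u + 2*u^2 := by
      rw [div_le_iff₀ h1]; nlinarith
    have h'' : (1-u)⁻¹ - 1 = u/(1-u) := by field_simp; ring
    linarith
  rw [Real.sqrt_eq_rpow, Real.rpow_def_of_pos h1, ← Real.exp_neg, Real.exp_le_exp]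
  nlinarith

/-- Lemma 4, Chernoff bound for weighted sums of χ² variables.
The χ² variables are `X i = (Z i)²` for i.i.d. standard Gaussians `Z i`. -/
theorem stmt_6 {D : ℕ} (hD : 0 < D)
    (lam : Fin D → ℝ) (hpos : ∀ i, 0 < lam i)
    (hsorted : ∀ i j : Fin D, i ≤ j → lam j ≤ lam i)
    {Ω : Type*} [MeasureSpace Ω] [IsProbabilityMeasure (ℙ : Measure Ω)]
    (Z : Fin D → Ω → ℝ)
    (hZmeas : ∀ i, Measurable (Z i))
    (hZindep : iIndepFun Z ℙ)
    (hZlaw : ∀ i, Measure.map (Z i) ℙ = gaussianReal 0 1)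
    (γ : ℝ) (hγ0 : 0 < γ) (hγ1 : γ < 1) :
    (ℙ {ω | (1 + γ) * ∑ i, lam i < ∑ i, lam i * (Z i ω) ^ 2}).toReal ≤
      Real.exp (-((D : ℝ) * γ ^ 2 / 24) *
        (((∑ i, lam i) / (D : ℝ)) / lam ⟨0, hD⟩)) := by
  set L := lam ⟨0, hD⟩ with hLdef
  have hL : 0 < L := hpos _
  have hle : ∀ i, lam i ≤ L := fun i => hsorted ⟨0, hD⟩ i (by simp [Fin.le_def])
  set Λ := ∑ i, lam i with hΛdef
  have hΛ : 0 < Λ := Finset.sum_pos (fun i _ => hpos i) ⟨⟨0, hD⟩, Finset.mem_univ _⟩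
  set t := γ / (6 * L) with htdef
  have ht : 0 < t := by positivity
  have htL : t * L = γ / 6 := by rw [htdef]; field_simp
  have hcle : ∀ i, t * lam i ≤ γ / 6 := fun i => by
    calc t * lam i ≤ t * L := by gcongr; exact hle i
      _ = γ / 6 := htL
  have hclt : ∀ i, t * lam i < 1 / 2 := fun i => lt_of_le_of_lt (hcle i) (by linarith)
  set X : Fin D → Ω → ℝ := fun i ω => lam i * Z i ω ^ 2 with hXdef
  have hXmeas : ∀ i, Measurable (X i) := fun i => ((hZmeas i).pow_const 2).const_mul _
  have hXindep : iIndepFun X ℙ :=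
    hZindep.comp (fun i (x : ℝ) => lam i * x ^ 2)
      (fun i => (measurable_id.pow_const 2).const_mul _)
  have hgm : ∀ i, AEStronglyMeasurable (fun x : ℝ => Real.exp ((t * lam i) * x ^ 2))
      (Measure.map (Z i) ℙ) := fun i =>
    (Real.continuous_exp.comp (by continuity)).aestronglyMeasurable
  have hcomp : ∀ i, (fun ω => Real.exp (t * X i ω))
      = (fun x : ℝ => Real.exp ((t * lam i) * x ^ 2)) ∘ Z i := by
    intro i; funext ω; simp only [hXdef, Function.comp_apply]; ring_nf
  have hXint : ∀ i, Integrable (fun ω => Real.exp (t * X i ω)) ℙ := by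
    intro i
    rw [hcomp i]
    refine (integrable_map_measure (hgm i) (hZmeas i).aemeasurable).mp ?_
    rw [hZlaw i]
    exact integrable_exp_mul_sq_gaussian _ (hclt i)
  have hmgf : ∀ i, mgf (X i) ℙ t = (Real.sqrt (1 - 2 * (t * lam i)))⁻¹ := by
    intro i
    calc mgf (X i) ℙ t = ∫ ω, Real.exp ((t * lam i) * Z i ω ^ 2) ∂ℙ := by
          show ∫ ω, Real.exp (t * X i ω) ∂ℙ = _
          congr 1; funext ω; simp only [hXdef]; ring_nf
      _ = ∫ x, Real.exp ((t * lam i) * x ^ 2) ∂(Measure.map (Z i) ℙ) :=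
          (integral_map (hZmeas i).aemeasurable (hgm i)).symm
      _ = (Real.sqrt (1 - 2 * (t * lam i)))⁻¹ := by
          rw [hZlaw i]; exact integral_exp_mul_sq_gaussian _ (hclt i)
  have hSint : Integrable (fun ω => Real.exp (t * (∑ i, X i) ω)) ℙ :=
    iIndepFun.integrable_exp_mul_sum hXindep hXmeas (fun i _ => hXint i)
  have hch := measure_ge_le_exp_mul_mgf (μ := ℙ) (X := ∑ i, X i) ((1 + γ) * Λ) ht.le hSint
  rw [hXindep.mgf_sum hXmeas] at hch
  have hset : {ω | (1 + γ) * Λ < ∑ i, lam i * Z i ω ^ 2}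
      ⊆ {ω | (1 + γ) * Λ ≤ (∑ i, X i) ω} := by
    intro ω hω
    simp only [Set.mem_setOf_eq, Finset.sum_apply, hXdef] at *
    exact le_of_lt hω
  have step1 : (ℙ {ω | (1 + γ) * Λ < ∑ i, lam i * Z i ω ^ 2}).toReal
      ≤ (ℙ {ω | (1 + γ) * Λ ≤ (∑ i, X i) ω}).toReal :=
    ENNReal.toReal_mono (measure_ne_top _ _) (measure_mono hset)
  have hprod : ∏ i, mgf (X i) ℙ t
      ≤ Real.exp (∑ i, ((2 * (t * lam i)) / 2 + (2 * (t * lam i)) ^ 2)) := by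
    rw [Real.exp_sum]
    refine Finset.prod_le_prod (fun i _ => by rw [hmgf i]; positivity) (fun i _ => ?_)
    rw [hmgf i]
    have h0 : 0 ≤ 2 * (t * lam i) := by nlinarith [mul_pos ht (hpos i)]
    have h2 : 2 * (t * lam i) ≤ 1 / 2 := by have := hcle i; linarith
    exact key_ineq h0 h2
  have hsum : ∑ i, ((2 * (t * lam i)) / 2 + (2 * (t * lam i)) ^ 2)
      ≤ t * Λ + 4 * t ^ 2 * (L * Λ) := by
    have h1 : ∀ i ∈ Finset.univ, (2 * (t * lam i)) / 2 + (2 * (t * lam i)) ^ 2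
        ≤ t * lam i + 4 * t ^ 2 * (L * lam i) := by
      intro i _
      have h2 := hle i
      have h3 := (hpos i).le
      nlinarith [mul_nonneg (mul_nonneg (sq_nonneg t) h3) (sub_nonneg.mpr h2)]
    calc ∑ i, ((2 * (t * lam i)) / 2 + (2 * (t * lam i)) ^ 2)
        ≤ ∑ i, (t * lam i + 4 * t ^ 2 * (L * lam i)) := Finset.sum_le_sum h1
      _ = t * Λ + 4 * t ^ 2 * (L * Λ) := by
          rw [Finset.sum_add_distrib, ← Finset.mul_sum]
          congr 1
          rw [← Finset.mul_sum, ← Finset.mul_sum]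
  have hexp : -t * ((1 + γ) * Λ) + (t * Λ + 4 * t ^ 2 * (L * Λ))
      ≤ -((D : ℝ) * γ ^ 2 / 24) * ((Λ / (D : ℝ)) / L) := by
    have hD' : (D : ℝ) ≠ 0 := Nat.cast_ne_zero.mpr hD.ne'
    have hrhs : -((D : ℝ) * γ ^ 2 / 24) * ((Λ / (D : ℝ)) / L) = -(γ ^ 2 * Λ) / (24 * L) := by
      field_simp
    have hlhs : -t * ((1 + γ) * Λ) + (t * Λ + 4 * t ^ 2 * (L * Λ)) = -(γ ^ 2 * Λ) / (18 * L) := by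
      rw [htdef]; field_simp; ring
    rw [hlhs, hrhs, neg_div, neg_div, neg_le_neg_iff,
      div_le_div_iff₀ (by positivity) (by positivity)]
    nlinarith [mul_nonneg (mul_nonneg (sq_nonneg γ) hΛ.le) hL.le]
  calc (ℙ {ω | (1 + γ) * Λ < ∑ i, lam i * Z i ω ^ 2}).toReal
      ≤ Real.exp (-t * ((1 + γ) * Λ)) * ∏ i, mgf (X i) ℙ t := step1.trans hch
    _ ≤ Real.exp (-t * ((1 + γ) * Λ))
        * Real.exp (∑ i, ((2 * (t * lam i)) / 2 + (2 * (t * lam i)) ^ 2)) := by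
          exact mul_le_mul_of_nonneg_left hprod (Real.exp_nonneg _)
    _ = Real.exp (-t * ((1 + γ) * Λ) + ∑ i, ((2 * (t * lam i)) / 2 + (2 * (t * lam i)) ^ 2)) :=
          (Real.exp_add _ _).symm
    _ ≤ Real.exp (-((D : ℝ) * γ ^ 2 / 24) * ((Λ / (D : ℝ)) / L)) := by
          rw [Real.exp_le_exp]
          linarith [hsum, hexp]
end

section
/- Let y ∈ ℝ^d have coordinates sorted by magnitude, |y₁| ≥ |y₂| ≥ … ≥ |y_d|, let k ≥ 0 and ℓ ≥ 1 be integers, and let Δ = y − y_{(1:k)} (the vector retaining only coordinates k+1,…,d of y). Partition the indices {k+1, …, d} into consecutive blocks J₀, J₁, J₂, … each of size ℓ (the last block possibly smaller), and for an index set J let y_J denote the vector agreeing with y on J and zero elsewhere. Then Σ_{i ≥ 0} ‖y_{J_i}‖₂ ≤ ‖Δ‖₂ + ℓ^{−1/2}·‖Δ‖₁. -/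
open Real MeasureTheory ProbabilityTheory

/-- block decomposition bound used in the proof of Theorem 1.
Coordinates are 0-indexed: sortedness means `|y 0| ≥ |y 1| ≥ …`, the head
`y_{(1:k)}` keeps coordinates `0,…,k−1`, and block `J i` consists of the
coordinates `j` with `k + i*ℓ ≤ j < k + (i+1)*ℓ`.  Summing over
`i ∈ range d` covers all nonempty blocks since `ℓ ≥ 1`. -/
theorem stmt_8 {d : ℕ} (y : Fin d → ℝ)
    (hsorted : ∀ i j : Fin d, i ≤ j → |y j| ≤ |y i|)
    (k ℓ : ℕ) (hℓ : 1 ≤ ℓ)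
    (Δ : Fin d → ℝ) (hΔ : ∀ j : Fin d, Δ j = if (j : ℕ) < k then 0 else y j)
    (yblock : ℕ → Fin d → ℝ)
    (hblock : ∀ (i : ℕ) (j : Fin d),
      yblock i j = if k + i * ℓ ≤ (j : ℕ) ∧ (j : ℕ) < k + (i + 1) * ℓ then y j else 0) :
    ∑ i ∈ Finset.range d, l2 (yblock i) ≤ l2 Δ + (1 / Real.sqrt ℓ) * l1 Δ := by
  classical
  obtain _ | n := d
  · simp [l2, l1]
  set B : ℕ → Finset (Fin (n + 1)) := fun i =>
    Finset.univ.filter (fun j : Fin (n + 1) => k + i * ℓ ≤ (j : ℕ) ∧ (j : ℕ) < k + (i + 1) * ℓ)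
    with hBdef
  have hmemB : ∀ i (j : Fin (n + 1)),
      j ∈ B i ↔ k + i * ℓ ≤ (j : ℕ) ∧ (j : ℕ) < k + (i + 1) * ℓ := by
    intro i j; simp [hBdef]
  have hℓR : (0:ℝ) < (ℓ : ℝ) := by exact_mod_cast hℓ
  have hsq : (0:ℝ) < Real.sqrt ℓ := Real.sqrt_pos.mpr hℓR
  have hl2b : ∀ i, l2 (yblock i) = Real.sqrt (∑ j ∈ B i, y j ^ 2) := by
    intro i
    unfold l2
    congr 1
    rw [Finset.sum_filter]
    apply Finset.sum_congr rfl
    intro j _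
    rw [hblock]
    split <;> simp
  have hl1b : ∀ i, l1 (yblock i) = ∑ j ∈ B i, |y j| := by
    intro i
    unfold l1
    rw [Finset.sum_filter]
    apply Finset.sum_congr rfl
    intro j _
    rw [hblock]
    split <;> simp
  have hl1bnn : ∀ i, 0 ≤ l1 (yblock i) := by
    intro i; rw [hl1b]; exact Finset.sum_nonneg fun j _ => abs_nonneg _
  have hΔy : ∀ i (j : Fin (n + 1)), j ∈ B i → Δ j = y j := by
    intro i j hj
    rw [hΔ]
    rw [hmemB] at hj
    have : ¬ ((j : ℕ) < k) := by have := hj.1; omega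
    simp [this]
  -- Step A : first block
  have stepA : l2 (yblock 0) ≤ l2 Δ := by
    rw [hl2b]
    unfold l2
    apply Real.sqrt_le_sqrt
    calc ∑ j ∈ B 0, y j ^ 2 = ∑ j ∈ B 0, Δ j ^ 2 :=
          Finset.sum_congr rfl fun j hj => by rw [hΔy 0 j hj]
      _ ≤ ∑ j, Δ j ^ 2 :=
          Finset.sum_le_sum_of_subset_of_nonneg (Finset.subset_univ _)
            (fun j _ _ => sq_nonneg _)
  -- Step B : later blocks
  have stepB : ∀ i, l2 (yblock (i + 1)) ≤ (1 / Real.sqrt ℓ) * l1 (yblock i) := by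
    intro i
    rcases Finset.eq_empty_or_nonempty (B (i + 1)) with he | ⟨j₀, hj₀⟩
    · rw [hl2b, he]
      simp only [Finset.sum_empty, Real.sqrt_zero]
      have := hl1bnn i
      positivity
    · rw [hmemB] at hj₀
      have hdle : k + (i + 1) * ℓ ≤ n + 1 := le_trans hj₀.1 (le_of_lt j₀.isLt)
      have hcardBi : (B i).card = ℓ := by
        have hbd : ∀ m ∈ Finset.Ico (k + i * ℓ) (k + (i + 1) * ℓ), m < n + 1 := by
          intro m hm
          rw [Finset.mem_Ico] at hm
          omega
        have : B i = (Finset.Ico (k + i * ℓ) (k + (i + 1) * ℓ)).attachFin hbd := by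
          ext j
          rw [hmemB, Finset.mem_attachFin, Finset.mem_Ico]
        rw [this, Finset.card_attachFin, Nat.card_Ico]
        have : i * ℓ + ℓ = (i + 1) * ℓ := by ring
        omega
      set L := l1 (yblock i) with hL
      have hLnn : 0 ≤ L := hl1bnn i
      have hentry : ∀ j : Fin (n + 1), j ∈ B (i + 1) → |y j| ≤ L / ℓ := by
        intro j hj
        rw [hmemB] at hj
        have key : (ℓ : ℝ) * |y j| ≤ L := by
          have h1 : ∑ j' ∈ B i, |y j| ≤ ∑ j' ∈ B i, |y j'| := by
            apply Finset.sum_le_sum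
            intro j' hj'
            rw [hmemB] at hj'
            apply hsorted
            show (j' : ℕ) ≤ (j : ℕ)
            have h1 := hj'.2
            have h2 := hj.1
            omega
          rw [hL, hl1b]
          calc (ℓ : ℝ) * |y j| = ((B i).card : ℝ) * |y j| := by rw [hcardBi]
            _ = ∑ j' ∈ B i, |y j| := by rw [Finset.sum_const, nsmul_eq_mul]
            _ ≤ ∑ j' ∈ B i, |y j'| := h1
        rw [le_div_iff₀ hℓR]
        linarith
      have hcard1 : (B (i + 1)).card ≤ ℓ := by
        have h := Finset.card_le_card_of_injOn (fun j : Fin (n + 1) => (j : ℕ))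
          (s := B (i + 1)) (t := Finset.Ico (k + (i + 1) * ℓ) (k + (i + 2) * ℓ))
          (by
            intro j hj
            rw [Finset.mem_coe, hmemB] at hj
            simp only [Finset.mem_coe, Finset.mem_Ico]
            have : (i + 1 + 1) * ℓ = (i + 2) * ℓ := by ring
            omega)
          (by intro a _ b _ hab; exact Fin.ext hab)
        rw [Nat.card_Ico] at h
        have h2 : (i + 2) * ℓ = (i + 1) * ℓ + ℓ := by ring
        omega
      rw [hl2b]
      have hsum : ∑ j ∈ B (i + 1), y j ^ 2 ≤ (L / Real.sqrt ℓ) ^ 2 := by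
        calc ∑ j ∈ B (i + 1), y j ^ 2 ≤ ∑ _j ∈ B (i + 1), (L / ℓ) ^ 2 := by
              apply Finset.sum_le_sum
              intro j hj
              have h1 := hentry j hj
              have h2 := abs_nonneg (y j)
              calc y j ^ 2 = |y j| ^ 2 := (sq_abs _).symm
                _ ≤ (L / ℓ) ^ 2 := by nlinarith
          _ = (B (i + 1)).card * (L / ℓ) ^ 2 := by rw [Finset.sum_const, nsmul_eq_mul]
          _ ≤ (ℓ : ℝ) * (L / ℓ) ^ 2 := by
              apply mul_le_mul_of_nonneg_right _ (sq_nonneg _)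
              exact_mod_cast hcard1
          _ = (L / Real.sqrt ℓ) ^ 2 := by
              rw [div_pow, div_pow, Real.sq_sqrt hℓR.le]
              field_simp
      calc Real.sqrt (∑ j ∈ B (i + 1), y j ^ 2) ≤ Real.sqrt ((L / Real.sqrt ℓ) ^ 2) :=
            Real.sqrt_le_sqrt hsum
        _ = L / Real.sqrt ℓ := Real.sqrt_sq (by positivity)
        _ = (1 / Real.sqrt ℓ) * L := by ring
  -- Step C
  have stepC : ∑ i ∈ Finset.range n, l1 (yblock i) ≤ l1 Δ := by
    have key : ∀ a b : ℕ, a < b → Disjoint (B a) (B b) := by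
      intro a b hab
      simp only [Finset.disjoint_left]
      intro j hja hjb
      rw [hmemB] at hja hjb
      have : (a + 1) * ℓ ≤ b * ℓ := Nat.mul_le_mul_right ℓ (by omega)
      omega
    have hdisj : (↑(Finset.range n) : Set ℕ).PairwiseDisjoint B := by
      intro a _ b _ hab
      rcases hab.lt_or_gt with h | h
      · exact key a b h
      · exact (key b a h).symm
    calc ∑ i ∈ Finset.range n, l1 (yblock i)
        = ∑ i ∈ Finset.range n, ∑ j ∈ B i, |Δ j| := by
          apply Finset.sum_congr rfl
          intro i _
          rw [hl1b]
          exact Finset.sum_congr rfl fun j hj => by rw [hΔy i j hj]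
      _ = ∑ j ∈ (Finset.range n).biUnion B, |Δ j| := (Finset.sum_biUnion hdisj).symm
      _ ≤ ∑ j, |Δ j| :=
          Finset.sum_le_sum_of_subset_of_nonneg (Finset.subset_univ _)
            (fun j _ _ => abs_nonneg _)
      _ = l1 Δ := rfl
  rw [Finset.sum_range_succ']
  have h2 : ∑ i ∈ Finset.range n, l2 (yblock (i + 1)) ≤ (1 / Real.sqrt ℓ) * l1 Δ := by
    calc ∑ i ∈ Finset.range n, l2 (yblock (i + 1))
        ≤ ∑ i ∈ Finset.range n, (1 / Real.sqrt ℓ) * l1 (yblock i) :=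
          Finset.sum_le_sum fun i _ => stepB i
      _ = (1 / Real.sqrt ℓ) * ∑ i ∈ Finset.range n, l1 (yblock i) := by
          rw [Finset.mul_sum]
      _ ≤ (1 / Real.sqrt ℓ) * l1 Δ := by
          apply mul_le_mul_of_nonneg_left stepC
          positivity
  linarith
end

section
/- Let y ∈ ℝ^d have coordinates sorted by magnitude, |y₁| ≥ |y₂| ≥ … ≥ |y_d|, let k ≥ 0 and ℓ ≥ 1 be integers, let Δ = y − y_{(1:k)}, and let A ∈ ℝ^{m×d} satisfy the (ℓ, δ)-restricted isometry property for some δ ∈ (0,1). Then ‖AΔ‖₂ ≤ (1+δ)^{1/2}·( ‖Δ‖₂ + ℓ^{−1/2}·‖Δ‖₁ ). -/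
open Real MeasureTheory ProbabilityTheory

lemma l2_eq_norm {n : ℕ} (v : Fin n → ℝ) :
    l2 v = ‖(WithLp.equiv 2 (Fin n → ℝ)).symm v‖ := by
  rw [EuclideanSpace.norm_eq]
  simp [l2, sq_abs]

lemma l2_sum_le {n : ℕ} {ι : Type*} (s : Finset ι) (f : ι → Fin n → ℝ) :
    l2 (∑ j ∈ s, f j) ≤ ∑ j ∈ s, l2 (f j) := by
  simp only [l2_eq_norm]
  have : (WithLp.equiv 2 (Fin n → ℝ)).symm (∑ j ∈ s, f j)
      = ∑ j ∈ s, (WithLp.equiv 2 (Fin n → ℝ)).symm (f j) :=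
    map_sum (WithLp.linearEquiv 2 ℝ (Fin n → ℝ)).symm f s
  rw [this]
  exact norm_sum_le s _

lemma l2_mono {n : ℕ} (v w : Fin n → ℝ) (h : ∑ i, v i ^ 2 ≤ ∑ i, w i ^ 2) : l2 v ≤ l2 w :=
  Real.sqrt_le_sqrt h

lemma nat_lt_div_succ_mul (a b : ℕ) (h : 0 < b) : a < (a / b + 1) * b := by
  have := Nat.div_add_mod a b
  have := Nat.mod_lt a h
  nlinarith [Nat.div_mul_le_self a b]

/-- bound on `‖AΔ‖₂` for an `(ℓ,δ)`-RIP matrix, from the proof of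
Theorem 1.  Coordinates are 0-indexed and sorted by decreasing magnitude, so
`y_{(1:k)}` keeps coordinates `0,…,k−1` and `Δ = y − y_{(1:k)}` keeps the rest. -/
theorem stmt_9 {m d : ℕ} (y : Fin d → ℝ)
    (hsorted : ∀ i j : Fin d, i ≤ j → |y j| ≤ |y i|)
    (k ℓ : ℕ) (hℓ : 1 ≤ ℓ)
    (Δ : Fin d → ℝ) (hΔ : ∀ j : Fin d, Δ j = if (j : ℕ) < k then 0 else y j)
    (A : Matrix (Fin m) (Fin d) ℝ)
    {δ : ℝ} (hδ0 : 0 < δ) (hδ1 : δ < 1) (hA : RIP ℓ δ A) :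
    l2 (A.mulVec Δ) ≤ Real.sqrt (1 + δ) * (l2 Δ + (1 / Real.sqrt ℓ) * l1 Δ) := by
  classical
  rcases Nat.eq_zero_or_pos d with hd | hd
  · subst hd
    have hΔ0 : Δ = 0 := funext fun i => i.elim0
    simp [l2, l1, hΔ0, Matrix.mulVec_zero]
  obtain ⟨n, rfl⟩ : ∃ n, d = n + 1 := ⟨d - 1, by omega⟩
  have hℓ0 : (0 : ℝ) < (ℓ : ℝ) := by exact_mod_cast hℓ
  -- blocks
  set B : ℕ → Finset (Fin (n + 1)) := fun j =>
    Finset.univ.filter (fun i => k + j * ℓ ≤ (i : ℕ) ∧ (i : ℕ) < k + (j + 1) * ℓ) with hB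
  set D : ℕ → Fin (n + 1) → ℝ := fun j i => if i ∈ B j then Δ i else 0 with hD
  have hmemB : ∀ (i : Fin (n + 1)) (j : ℕ),
      i ∈ B j ↔ (k + j * ℓ ≤ (i : ℕ) ∧ (i : ℕ) < k + (j + 1) * ℓ) := by
    intro i j; simp [hB]
  -- uniqueness of blocks
  have huniq : ∀ (i : Fin (n + 1)) (j j' : ℕ), i ∈ B j → i ∈ B j' → j = j' := by
    intro i j j' hj hj'
    rw [hmemB] at hj hj'
    by_contra hne
    rcases Nat.lt_or_ge j j' with hlt | hge
    · have h1 : (j + 1) * ℓ ≤ j' * ℓ := Nat.mul_le_mul_right ℓ hlt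
      exact absurd (lt_of_lt_of_le hj.2 (le_trans (Nat.add_le_add_left h1 k) hj'.1))
        (lt_irrefl _)
    · have hlt : j' < j := lt_of_le_of_ne hge (fun h => hne h.symm)
      have h1 : (j' + 1) * ℓ ≤ j * ℓ := Nat.mul_le_mul_right ℓ hlt
      exact absurd (lt_of_lt_of_le hj'.2 (le_trans (Nat.add_le_add_left h1 k) hj.1))
        (lt_irrefl _)
  -- Ico cardinality
  have hIco : ∀ j : ℕ, (Finset.Ico (k + j * ℓ) (k + (j + 1) * ℓ)).card = ℓ := by
    intro j
    rw [Nat.card_Ico, add_one_mul, ← add_assoc, Nat.add_sub_cancel_left]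
  -- decomposition
  have hdecomp : Δ = ∑ j ∈ Finset.range (n + 1), D j := by
    funext i
    rw [Finset.sum_apply]
    by_cases hik : (i : ℕ) < k
    · rw [hΔ i, if_pos hik]
      symm
      apply Finset.sum_eq_zero
      intro j _
      simp only [hD]
      rw [if_neg]
      rw [hmemB]
      push_neg
      intro h; omega
    · set j0 := ((i : ℕ) - k) / ℓ with hj0
      obtain ⟨t, ht⟩ : ∃ t, (i : ℕ) = k + t := ⟨(i : ℕ) - k, by omega⟩
      have h1 : j0 * ℓ ≤ t := by
        rw [hj0, ht]; simpa using Nat.div_mul_le_self t ℓ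
      have h2 : t < (j0 + 1) * ℓ := by
        rw [hj0, ht]; simpa using nat_lt_div_succ_mul t ℓ (by omega)
      have hmem : i ∈ B j0 := by
        rw [hmemB, ht]
        exact ⟨Nat.add_le_add_left h1 k, Nat.add_lt_add_left h2 k⟩
      have hj0d : j0 < n + 1 := by
        have h3 : j0 ≤ t := le_trans (Nat.le_mul_of_pos_right j0 (by omega)) h1
        have hti : t ≤ (i : ℕ) := by omega
        exact lt_of_le_of_lt (le_trans h3 hti) i.isLt
      rw [Finset.sum_eq_single j0]
      · simp [hD, hmem]
      · intro j _ hne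
        simp only [hD]
        rw [if_neg]
        intro hmem'
        exact hne (huniq i j j0 hmem' hmem)
      · intro h; exact absurd (Finset.mem_range.mpr hj0d) h
  -- cardinality bound
  have hcard : ∀ j, (B j).card ≤ ℓ := by
    intro j
    have hcc : (B j).card ≤ (Finset.Ico (k + j * ℓ) (k + (j + 1) * ℓ)).card := by
      refine Finset.card_le_card_of_injOn (fun i => (i : ℕ)) ?_ ?_
      · intro i hi
        rw [Finset.mem_coe, hmemB] at hi
        simp [Finset.mem_Ico, hi.1, hi.2]
      · intro a _ b _ hab; exact Fin.val_injective hab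
    rw [hIco j] at hcc
    exact hcc
  -- sparsity
  have hsp : ∀ j, Sparse ℓ (D j) := by
    intro j
    refine le_trans (Finset.card_le_card ?_) (hcard j)
    intro i hi
    simp only [Finset.mem_filter, hD] at hi
    by_contra hmem
    exact hi.2 (if_neg hmem)
  -- RIP bound per block
  have hrip : ∀ j, l2 (A.mulVec (D j)) ≤ Real.sqrt (1 + δ) * l2 (D j) := by
    intro j
    have h := (hA (D j) (hsp j)).2
    rw [← Real.sqrt_sq (l2_nonneg (A.mulVec (D j)))]
    calc Real.sqrt (l2 (A.mulVec (D j)) ^ 2)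
        ≤ Real.sqrt ((1 + δ) * l2 (D j) ^ 2) := Real.sqrt_le_sqrt h
      _ = Real.sqrt (1 + δ) * l2 (D j) := by
          rw [Real.sqrt_mul (by linarith), Real.sqrt_sq (l2_nonneg _)]
  -- key: elements of block j+1 are dominated by the average of block j
  have key : ∀ (j : ℕ), ∀ i ∈ B (j + 1), (ℓ : ℝ) * |Δ i| ≤ ∑ t ∈ B j, |Δ t| := by
    intro j i hi
    rw [hmemB] at hi
    -- block j is full
    have hfull : ℓ ≤ (B j).card := by
      have hcc : (Finset.Ico (k + j * ℓ) (k + (j + 1) * ℓ)).card ≤ (B j).card := by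
        apply Finset.card_le_card_of_injOn
          (fun t : ℕ => (⟨t % (n + 1), Nat.mod_lt t (Nat.succ_pos n)⟩ : Fin (n + 1)))
        · intro t ht
          rw [Finset.mem_coe, Finset.mem_Ico] at ht
          have htd : t < n + 1 := lt_of_lt_of_le (lt_of_lt_of_le ht.2 hi.1) (le_of_lt i.isLt)
          rw [Finset.mem_coe, hmemB]
          simp only [Nat.mod_eq_of_lt htd]
          exact ht
        · intro a ha b hb hab
          simp only [Finset.coe_Ico, Set.mem_Ico] at ha hb
          have had : a < n + 1 := lt_of_lt_of_le (lt_of_lt_of_le ha.2 hi.1) (le_of_lt i.isLt)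
          have hbd : b < n + 1 := lt_of_lt_of_le (lt_of_lt_of_le hb.2 hi.1) (le_of_lt i.isLt)
          have h := congrArg Fin.val hab
          simpa [Nat.mod_eq_of_lt had, Nat.mod_eq_of_lt hbd] using h
      rw [hIco j] at hcc
      exact hcc
    have hterm : ∀ t ∈ B j, |Δ i| ≤ |Δ t| := by
      intro t ht
      rw [hmemB] at ht
      have hkj : k ≤ (t : ℕ) := le_trans (Nat.le_add_right k (j * ℓ)) ht.1
      have hki : k ≤ (i : ℕ) := le_trans (Nat.le_add_right k ((j + 1) * ℓ)) hi.1
      have hti : (t : ℕ) ≤ (i : ℕ) := le_trans (le_of_lt ht.2) hi.1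
      rw [hΔ i, hΔ t, if_neg (by omega), if_neg (by omega)]
      exact hsorted t i hti
    calc (ℓ : ℝ) * |Δ i| ≤ ((B j).card : ℝ) * |Δ i| := by
          apply mul_le_mul_of_nonneg_right _ (abs_nonneg _)
          exact_mod_cast hfull
      _ = ∑ _t ∈ B j, |Δ i| := by rw [Finset.sum_const, nsmul_eq_mul]
      _ ≤ ∑ t ∈ B j, |Δ t| := Finset.sum_le_sum hterm
  -- l2 bound for later blocks
  have hblock : ∀ j : ℕ, l2 (D (j + 1)) ≤ (1 / Real.sqrt ℓ) * ∑ t ∈ B j, |Δ t| := by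
    intro j
    set S := ∑ t ∈ B j, |Δ t| with hS
    have hS0 : 0 ≤ S := Finset.sum_nonneg fun _ _ => abs_nonneg _
    have hsum : ∑ i, D (j + 1) i ^ 2 ≤ S ^ 2 / ℓ := by
      have h1 : ∑ i, D (j + 1) i ^ 2 = ∑ i ∈ Finset.univ ∩ B (j + 1), Δ i ^ 2 := by
        rw [← Finset.sum_ite_mem]
        apply Finset.sum_congr rfl
        intro i _
        simp only [hD]
        split <;> simp
      rw [h1, Finset.univ_inter]
      have h2 : ∀ i ∈ B (j + 1), Δ i ^ 2 ≤ (S / ℓ) ^ 2 := by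
        intro i hi
        have hk := key j i hi
        have habs : |Δ i| ≤ S / ℓ := by
          rw [le_div_iff₀ hℓ0, mul_comm]; exact hk
        calc Δ i ^ 2 = |Δ i| ^ 2 := (sq_abs _).symm
          _ ≤ (S / ℓ) ^ 2 := pow_le_pow_left₀ (abs_nonneg _) habs 2
      calc ∑ i ∈ B (j + 1), Δ i ^ 2 ≤ ∑ _i ∈ B (j + 1), (S / ℓ) ^ 2 := Finset.sum_le_sum h2
        _ = ((B (j + 1)).card : ℝ) * (S / ℓ) ^ 2 := by rw [Finset.sum_const, nsmul_eq_mul]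
        _ ≤ (ℓ : ℝ) * (S / ℓ) ^ 2 := by
            apply mul_le_mul_of_nonneg_right _ (sq_nonneg _)
            exact_mod_cast hcard (j + 1)
        _ = S ^ 2 / ℓ := by field_simp
    calc l2 (D (j + 1)) ≤ Real.sqrt (S ^ 2 / ℓ) := Real.sqrt_le_sqrt hsum
      _ = (1 / Real.sqrt ℓ) * S := by
          rw [Real.sqrt_div (sq_nonneg S), Real.sqrt_sq hS0, one_div, inv_mul_eq_div]
  -- total ℓ₁ mass of blocks
  have hS_sum : ∑ j ∈ Finset.range n, ∑ t ∈ B j, |Δ t| ≤ l1 Δ := by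
    have hdisj : (↑(Finset.range n) : Set ℕ).PairwiseDisjoint B := by
      intro a _ b _ hab
      simp only [Function.onFun]
      rw [Finset.disjoint_left]
      intro i hia hib
      exact hab (huniq i a b hia hib)
    rw [← Finset.sum_biUnion hdisj]
    apply Finset.sum_le_sum_of_subset_of_nonneg (Finset.subset_univ _)
    intro i _ _
    exact abs_nonneg _
  -- assembly
  have hmv : A.mulVec Δ = ∑ j ∈ Finset.range (n + 1), A.mulVec (D j) := by
    rw [hdecomp]
    exact map_sum A.mulVecLin D _
  calc l2 (A.mulVec Δ)
      = l2 (∑ j ∈ Finset.range (n + 1), A.mulVec (D j)) := by rw [hmv]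
    _ ≤ ∑ j ∈ Finset.range (n + 1), l2 (A.mulVec (D j)) := l2_sum_le _ _
    _ ≤ ∑ j ∈ Finset.range (n + 1), Real.sqrt (1 + δ) * l2 (D j) :=
        Finset.sum_le_sum fun j _ => hrip j
    _ = Real.sqrt (1 + δ) * ∑ j ∈ Finset.range (n + 1), l2 (D j) :=
        (Finset.mul_sum _ _ _).symm
    _ ≤ Real.sqrt (1 + δ) * (l2 Δ + (1 / Real.sqrt ℓ) * l1 Δ) := by
        apply mul_le_mul_of_nonneg_left _ (Real.sqrt_nonneg _)
        rw [Finset.sum_range_succ']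
        have h0 : l2 (D 0) ≤ l2 Δ := by
          apply l2_mono
          apply Finset.sum_le_sum
          intro i _
          simp only [hD]
          split
          · exact le_refl _
          · simpa using sq_nonneg (Δ i)
        have h1 : ∑ j ∈ Finset.range n, l2 (D (j + 1)) ≤ (1 / Real.sqrt ℓ) * l1 Δ := by
          calc ∑ j ∈ Finset.range n, l2 (D (j + 1))
              ≤ ∑ j ∈ Finset.range n, (1 / Real.sqrt ℓ) * ∑ t ∈ B j, |Δ t| :=
                Finset.sum_le_sum fun j _ => hblock j
            _ = (1 / Real.sqrt ℓ) * ∑ j ∈ Finset.range n, ∑ t ∈ B j, |Δ t| :=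
                (Finset.mul_sum _ _ _).symm
            _ ≤ (1 / Real.sqrt ℓ) * l1 Δ := by
                apply mul_le_mul_of_nonneg_left hS_sum
                positivity
        linarith
end

section
/- Let k ≥ 1, let A = [a₁ | … | a_d] ∈ ℝ^{m×d} have unit ℓ₂-norm columns with coherence μ(A) ≤ 0.1/k, where d > 2k. Let h ∈ ℝ^m, and let ŷ', y' ∈ ℝ^d be vectors both supported on {1, …, 2k}. Set r = h − Ay' and r̂ = h − Aŷ', and suppose j > 2k is an index such that |a_jᵀ r̂| ≥ |a_ℓᵀ r̂| for every ℓ ≤ 2k. Then ‖A(ŷ' − y')‖₂² ≤ 4·‖r‖₂² + 10k·(a_jᵀ r)². -/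
open Real MeasureTheory ProbabilityTheory

set_option maxHeartbeats 1600000 in
/-- key intermediate inequality in the proof of Theorem 2.
Coordinates are 0-indexed: "supported on `{1,…,2k}`" becomes "supported on the
first `2k` coordinates", and the selected column `j` lies outside them. -/
theorem stmt_11 {m d k : ℕ} (hk : 1 ≤ k) (hd : 2 * k < d)
    (A : Matrix (Fin m) (Fin d) ℝ)
    (hcols : ∀ j : Fin d, l2 (fun i => A i j) = 1)
    (hcoh : ∀ j j' : Fin d, j ≠ j' → |∑ i, A i j * A i j'| ≤ 0.1 / (k : ℝ))
    (h : Fin m → ℝ) (yhat' y' : Fin d → ℝ)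
    (hyhat'supp : ∀ c : Fin d, 2 * k ≤ (c : ℕ) → yhat' c = 0)
    (hy'supp : ∀ c : Fin d, 2 * k ≤ (c : ℕ) → y' c = 0)
    (r rhat : Fin m → ℝ)
    (hr : r = h - A.mulVec y') (hrhat : rhat = h - A.mulVec yhat')
    (j : Fin d) (hj : 2 * k ≤ (j : ℕ))
    (hmax : ∀ c : Fin d, (c : ℕ) < 2 * k →
      |∑ i, A i c * rhat i| ≤ |∑ i, A i j * rhat i|) :
    l2 (A.mulVec (yhat' - y')) ^ 2 ≤
      4 * l2 r ^ 2 + 10 * (k : ℝ) * (∑ i, A i j * r i) ^ 2 := by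
  classical
  have kpos : (0:ℝ) < k := by exact_mod_cast hk
  have kne : (k:ℝ) ≠ 0 := ne_of_gt kpos
  set u : Fin d → ℝ := yhat' - y' with hu
  set v : Fin m → ℝ := A.mulVec u with hv
  set μ0 : ℝ := 0.1 / (k:ℝ) with hμ0def
  have hμ0 : 0 ≤ μ0 := by positivity
  have l2sq : ∀ (n : ℕ) (x : Fin n → ℝ), l2 x ^ 2 = ∑ i, x i ^ 2 := by
    intro n x
    rw [l2, Real.sq_sqrt]
    positivity
  have usupp : ∀ c : Fin d, 2 * k ≤ (c : ℕ) → u c = 0 := by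
    intro c hc
    simp [hu, hyhat'supp c hc, hy'supp c hc]
  have hvrr : ∀ i, v i = r i - rhat i := by
    intro i
    have : v = r - rhat := by
      rw [hv, hu, Matrix.mulVec_sub, hr, hrhat]
      ring
    rw [this]; rfl
  -- shorthand scalars
  set V : ℝ := ∑ i, v i ^ 2 with hV
  set U2 : ℝ := ∑ c, u c ^ 2 with hU2
  set L1 : ℝ := ∑ c, |u c| with hL1
  set P : ℝ := ∑ i, v i * r i with hP
  set R2 : ℝ := ∑ i, r i ^ 2 with hR2
  set T : ℝ := |∑ i, A i j * r i| with hT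
  set M : ℝ := |∑ i, A i j * rhat i| with hM
  have hV0 : 0 ≤ V := Finset.sum_nonneg fun i _ => sq_nonneg _
  have hU20 : 0 ≤ U2 := Finset.sum_nonneg fun i _ => sq_nonneg _
  have hR20 : 0 ≤ R2 := Finset.sum_nonneg fun i _ => sq_nonneg _
  have hL10 : 0 ≤ L1 := Finset.sum_nonneg fun i _ => abs_nonneg _
  have hT0 : 0 ≤ T := abs_nonneg _
  have hM0 : 0 ≤ M := abs_nonneg _
  -- Gram diagonal is 1
  have Gdiag : ∀ c : Fin d, (∑ i, A i c * A i c) = 1 := by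
    intro c
    have h1 := hcols c
    rw [l2] at h1
    have h2 : (∑ i, A i c ^ 2) = 1 := by
      have := congrArg (fun x => x ^ 2) h1
      simpa [Real.sq_sqrt (Finset.sum_nonneg fun i _ => sq_nonneg (A i c))] using this
    calc (∑ i, A i c * A i c) = ∑ i, A i c ^ 2 := by
          exact Finset.sum_congr rfl fun i _ => (sq (A i c)).symm ▸ (sq (A i c)) ▸ rfl
      _ = 1 := h2
  -- expansion of V over pairs
  have hVexp : V = ∑ c, ∑ c', u c * u c' * (∑ i, A i c * A i c') := by
    have hterm : ∀ i, v i ^ 2 = ∑ c, ∑ c', u c * u c' * (A i c * A i c') := by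
      intro i
      rw [sq]
      simp only [hv, Matrix.mulVec, dotProduct]
      rw [Finset.sum_mul_sum]
      exact Finset.sum_congr rfl fun c _ => Finset.sum_congr rfl fun c' _ => by ring
    rw [hV]
    simp only [hterm, Finset.mul_sum]
    rw [Finset.sum_comm]
    exact Finset.sum_congr rfl fun c _ => Finset.sum_comm
  -- lower bound on V : U2 ≤ V + μ0 * L1^2
  have hVlow : U2 ≤ V + μ0 * L1 ^ 2 := by
    have key : ∀ c c' : Fin d,
        (if c' = c then u c ^ 2 else 0) ≤ u c * u c' * (∑ i, A i c * A i c') + μ0 * (|u c| * |u c'|) := by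
      intro c c'
      by_cases hcc : c' = c
      · subst hcc
        rw [if_pos rfl, Gdiag c']
        nlinarith [sq_nonneg (u c'), hμ0, abs_mul_abs_self (u c')]
      · simp only [if_neg hcc]
        have hne : c ≠ c' := fun hx => hcc hx.symm
        have hG := hcoh c c' hne
        have habs : |u c * u c' * (∑ i, A i c * A i c')| ≤ |u c| * |u c'| * μ0 := by
          rw [abs_mul, abs_mul]
          exact mul_le_mul_of_nonneg_left hG (by positivity)
        nlinarith [neg_abs_le (u c * u c' * (∑ i, A i c * A i c'))]
    have hsum := Finset.sum_le_sum (fun c (_ : c ∈ Finset.univ) =>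
      Finset.sum_le_sum (fun c' (_ : c' ∈ Finset.univ) => key c c'))
    have hlhs : (∑ c : Fin d, ∑ c' : Fin d, if c' = c then u c ^ 2 else 0) = U2 := by
      simp [Finset.sum_ite_eq', hU2]
    have hrhs : (∑ c : Fin d, ∑ c' : Fin d,
        (u c * u c' * (∑ i, A i c * A i c') + μ0 * (|u c| * |u c'|))) = V + μ0 * L1 ^ 2 := by
      rw [hVexp]
      simp only [Finset.sum_add_distrib]
      congr 1
      rw [hL1, sq, Finset.sum_mul_sum, Finset.mul_sum]
      exact Finset.sum_congr rfl fun c _ => by rw [Finset.mul_sum]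
    rw [hlhs, hrhs] at hsum
    exact hsum
  -- Cauchy-Schwarz on the support: L1^2 ≤ 2k * U2
  have hL1sq : L1 ^ 2 ≤ 2 * (k:ℝ) * U2 := by
    set S : Finset (Fin d) := Finset.univ.filter (fun c => (c:ℕ) < 2 * k) with hS
    have hL1S : L1 = ∑ c ∈ S, |u c| := by
      rw [hL1]
      refine (Finset.sum_subset (Finset.subset_univ S) ?_).symm
      intro c _ hc
      have : ¬ ((c:ℕ) < 2 * k) := by simpa [hS] using hc
      rw [usupp c (le_of_not_gt this), abs_zero]
    have hcard : (S.card : ℝ) ≤ 2 * (k:ℝ) := by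
      have : S.card ≤ (Finset.range (2*k)).card := by
        apply Finset.card_le_card_of_injOn Fin.val
        · intro c hc
          simp only [hS, Finset.mem_filter] at hc
          have hc2 : (c:ℕ) < 2 * k := by simpa using hc
          simpa using hc2
        · intro a _ b _ hab
          exact Fin.val_injective hab
      simp only [Finset.card_range] at this
      calc (S.card : ℝ) ≤ ((2*k : ℕ) : ℝ) := by exact_mod_cast this
        _ = 2 * (k:ℝ) := by push_cast; ring
    have hcs := Finset.sum_mul_sq_le_sq_mul_sq S (fun _ => (1:ℝ)) (fun c => |u c|)
    simp only [one_mul, one_pow] at hcs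
    have h1 : (∑ _c ∈ S, (1:ℝ)) = (S.card : ℝ) := by simp
    rw [h1] at hcs
    have h2 : (∑ c ∈ S, |u c| ^ 2) ≤ U2 := by
      rw [hU2]
      refine Finset.sum_le_sum_of_subset_of_nonneg (Finset.subset_univ S) ?_ |>.trans_eq ?_
      · intro i _ _; positivity
      · exact Finset.sum_congr rfl fun c _ => by rw [sq_abs]
    calc L1 ^ 2 = (∑ c ∈ S, |u c|) ^ 2 := by rw [hL1S]
      _ ≤ (S.card : ℝ) * ∑ c ∈ S, |u c| ^ 2 := hcs
      _ ≤ (2 * (k:ℝ)) * U2 := by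
          apply mul_le_mul hcard h2 (Finset.sum_nonneg fun c _ => by positivity) (by linarith)
  -- hence U2 ≤ 1.25 V and L1^2 ≤ 2.5 k V
  clear_value V U2 L1 P R2 T M
  have hmu2k : μ0 * (2 * (k:ℝ)) = 0.2 := by
    rw [hμ0def]; field_simp; ring
  have hU2V : U2 ≤ 1.25 * V := by
    have h1 : μ0 * L1 ^ 2 ≤ μ0 * (2 * (k:ℝ) * U2) := mul_le_mul_of_nonneg_left hL1sq hμ0
    have h2 : μ0 * (2 * (k:ℝ) * U2) = 0.2 * U2 := by rw [← mul_assoc, hmu2k]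
    linarith
  have hL1V : L1 ^ 2 ≤ 2.5 * (k:ℝ) * V := by
    have h3 : 2*(k:ℝ)*U2 ≤ 2*(k:ℝ)*(1.25*V) := mul_le_mul_of_nonneg_left hU2V (by positivity)
    nlinarith [hL1sq]
  -- V = P - Q where Q = Σ_c u c * (a_c ⬝ rhat)
  have hVPQ : V = P - ∑ c, u c * (∑ i, A i c * rhat i) := by
    have hQ : (∑ i, v i * rhat i) = ∑ c, u c * (∑ i, A i c * rhat i) := by
      simp only [hv, Matrix.mulVec, dotProduct, Finset.sum_mul, Finset.mul_sum]
      rw [Finset.sum_comm]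
      exact Finset.sum_congr rfl fun c _ => Finset.sum_congr rfl fun i _ => by ring
    rw [hV, hP, ← hQ, ← Finset.sum_sub_distrib]
    exact Finset.sum_congr rfl fun i _ => by rw [sq, hvrr i]; ring
  -- |Q| ≤ L1 * M
  have hQbound : |∑ c, u c * (∑ i, A i c * rhat i)| ≤ L1 * M := by
    calc |∑ c, u c * (∑ i, A i c * rhat i)| ≤ ∑ c, |u c * (∑ i, A i c * rhat i)| :=
          Finset.abs_sum_le_sum_abs _ _
      _ ≤ ∑ c, |u c| * M := by
          apply Finset.sum_le_sum
          intro c _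
          rw [abs_mul]
          by_cases hc : (c:ℕ) < 2 * k
          · exact mul_le_mul_of_nonneg_left (hmax c hc) (abs_nonneg _)
          · rw [usupp c (le_of_not_gt hc)]; simp
      _ = L1 * M := by rw [hL1, Finset.sum_mul]
  -- M ≤ T + μ0 * L1
  have hMT : M ≤ T + μ0 * L1 := by
    have hsplit : (∑ i, A i j * rhat i) = (∑ i, A i j * r i) - ∑ c, u c * (∑ i, A i j * A i c) := by
      have hAv : (∑ i, A i j * v i) = ∑ c, u c * (∑ i, A i j * A i c) := by
        simp only [hv, Matrix.mulVec, dotProduct, Finset.mul_sum]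
        rw [Finset.sum_comm]
        exact Finset.sum_congr rfl fun c _ => Finset.sum_congr rfl fun i _ => by ring
      rw [← hAv, ← Finset.sum_sub_distrib]
      exact Finset.sum_congr rfl fun i _ => by rw [hvrr i]; ring
    have hY : |∑ c, u c * (∑ i, A i j * A i c)| ≤ μ0 * L1 := by
      calc |∑ c, u c * (∑ i, A i j * A i c)| ≤ ∑ c, |u c * (∑ i, A i j * A i c)| :=
            Finset.abs_sum_le_sum_abs _ _
        _ ≤ ∑ c, μ0 * |u c| := by
            apply Finset.sum_le_sum
            intro c _
            rw [abs_mul]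
            by_cases hc : (c:ℕ) < 2 * k
            · have hne : j ≠ c := by
                intro hx
                rw [← hx] at hc
                omega
              calc |u c| * |∑ i, A i j * A i c| ≤ |u c| * μ0 :=
                    mul_le_mul_of_nonneg_left (hcoh j c hne) (abs_nonneg _)
                _ = μ0 * |u c| := by ring
            · rw [usupp c (le_of_not_gt hc)]; simp
        _ = μ0 * L1 := by rw [hL1, Finset.mul_sum]
    rw [hM, hsplit]
    calc |(∑ i, A i j * r i) - ∑ c, u c * (∑ i, A i j * A i c)|
        ≤ |∑ i, A i j * r i| + |∑ c, u c * (∑ i, A i j * A i c)| := abs_sub _ _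
      _ ≤ T + μ0 * L1 := by rw [hT]; exact add_le_add le_rfl hY
  -- P^2 ≤ V * R2
  have hPsq : P ^ 2 ≤ V * R2 := by
    rw [hP, hV, hR2]
    exact Finset.sum_mul_sq_le_sq_mul_sq _ _ _
  -- main inequality: 0.75 V ≤ P + L1 * T
  have hmuL1 : μ0 * L1 ^ 2 ≤ 0.25 * V := by
    have h1 : μ0 * L1 ^ 2 ≤ μ0 * (2.5 * (k:ℝ) * V) := mul_le_mul_of_nonneg_left hL1V hμ0
    have h2 : μ0 * (2.5 * (k:ℝ) * V) = 0.25 * V := by rw [hμ0def]; field_simp; ring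
    linarith
  have hmain : 0.75 * V ≤ P + L1 * T := by
    have h1 : V ≤ P + L1 * M := by
      rw [hVPQ]
      have := neg_abs_le (∑ c, u c * (∑ i, A i c * rhat i))
      linarith [hQbound]
    have h2 : L1 * M ≤ L1 * (T + μ0 * L1) := mul_le_mul_of_nonneg_left hMT hL10
    nlinarith [hmuL1]
  -- conclude
  have hgoalT : (∑ i, A i j * r i) ^ 2 = T ^ 2 := by rw [hT, sq_abs]
  have hgoalV : l2 (A.mulVec (yhat' - y')) ^ 2 = V := by rw [l2sq, hV, ← hu, ← hv]
  have hgoalR : l2 r ^ 2 = R2 := by rw [l2sq, hR2]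
  rw [hgoalT, hgoalV, hgoalR]
  rcases eq_or_lt_of_le hV0 with hVz | hVpos
  · rw [← hVz]
    positivity
  · nlinarith [sq_nonneg (P - L1 * T), mul_le_mul_of_nonneg_right hL1V (sq_nonneg T),
      mul_le_mul hmain hmain (by linarith) (by linarith), hPsq,
      mul_nonneg hV0 hR20, mul_nonneg (mul_nonneg kpos.le hV0) (sq_nonneg T),
      mul_pos hVpos hVpos]
end
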